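/- arXiv:0810.1408 — 6 statements merged into one kernel-verified Lean document; each statement's English description precedes it below -/
import Mathlib

section
/- Let α ∈ (0,1/2) and for z in the upper half-plane Π⁺ define f_k(z) = 2^{α-1} [α(1−2α)(2−2α)_k / (2 cos(πα) k!)]^{1/2} ((z+i)/(2i))^{2α−2} ((z−i)/(z+i))^k, where (x)_k is the Pochhammer symbol. Then for all z,w ∈ Π⁺ the series Σ_{k≥0} f_k(z) \overline{f_k(w)} converges absolutely and equals (α(1−2α)/(2 cos πα)) (−i(z − \bar{w}))^{2α−2}, where ζ^{2α−2} = exp((2α−2) log ζ) with the principal branch of the logarithm on ℂ∖ℝ₋. -/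
open Complex Real

noncomputable def binc (β : ℝ) (k : ℕ) : ℝ :=
  Polynomial.eval β (ascPochhammer ℝ k) / k.factorial

lemma binc_zero (β : ℝ) : binc β 0 = 1 := by simp [binc]

lemma binc_succ (β : ℝ) (k : ℕ) :
    binc β (k + 1) * (k + 1) = binc β k * (β + k) := by
  have hk : ((k:ℝ) + 1) ≠ 0 := by positivity
  have : (Nat.factorial (k+1) : ℝ) = (k+1) * (Nat.factorial k) := by
    push_cast [Nat.factorial_succ]; ring
  rw [binc, binc, ascPochhammer_succ_eval, this]
  field_simp

lemma binc_nonneg {β : ℝ} (hβ : 0 < β) (k : ℕ) : 0 ≤ binc β k := by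
  have h1 := ascPochhammer_pos k β hβ
  have h2 : (0:ℝ) < k.factorial := by positivity
  exact le_of_lt (div_pos h1 h2)

lemma binc_le {β : ℝ} (hβ0 : 0 < β) (hβ2 : β ≤ 2) (k : ℕ) : binc β k ≤ k + 1 := by
  induction k with
  | zero => simp [binc_zero]
  | succ k ih =>
    have hk : (0:ℝ) < (k:ℝ) + 1 := by positivity
    have h1 : binc β (k+1) = binc β k * (β + k) / (k + 1) := by
      rw [← binc_succ β k, mul_div_assoc, div_self hk.ne', mul_one]
    rw [h1]
    rw [div_le_iff₀ hk]
    have hb : binc β k * (β + k) ≤ (k+1) * (2 + k) := by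
      apply mul_le_mul ih (by linarith) (by positivity) (by positivity)
    push_cast
    nlinarith

lemma summable_aux {r : ℝ} (h0 : 0 ≤ r) (h1 : r < 1) :
    Summable (fun k : ℕ => ((k:ℝ) + 1) * k * r ^ (k - 1)) := by
  have hr : ‖r‖ < 1 := by rwa [Real.norm_eq_abs, _root_.abs_of_nonneg h0]
  rw [← summable_nat_add_iff 1]
  have h2 : Summable (fun k : ℕ => ((k:ℝ))^2 * r ^ k) :=
    summable_pow_mul_geometric_of_norm_lt_one 2 hr
  have h1' : Summable (fun k : ℕ => ((k:ℝ))^1 * r ^ k) :=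
    summable_pow_mul_geometric_of_norm_lt_one 1 hr
  have h0' : Summable (fun k : ℕ => r ^ k) := summable_geometric_of_lt_one h0 h1
  have : Summable (fun k : ℕ => ((k:ℝ))^2 * r ^ k + 3 * ((k:ℝ)^1 * r ^ k) + 2 * r ^ k) :=
    (h2.add (h1'.mul_left 3)).add (h0'.mul_left 2)
  convert this using 2 with k
  · rfl
  push_cast [Nat.add_sub_cancel]
  ring

lemma summable_binc_norm {β : ℝ} (hβ0 : 0 < β) (hβ2 : β ≤ 2) {q : ℂ} (hq : ‖q‖ < 1) :
    Summable (fun k : ℕ => ‖(binc β k : ℂ) * q ^ k‖) := by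
  have h0' : Summable (fun k : ℕ => ‖q‖ ^ k) :=
    summable_geometric_of_lt_one (norm_nonneg q) hq
  have h1' : Summable (fun k : ℕ => ((k:ℝ))^1 * ‖q‖ ^ k) :=
    summable_pow_mul_geometric_of_norm_lt_one 1 (by rwa [norm_norm])
  refine Summable.of_nonneg_of_le (fun k => norm_nonneg _) (fun k => ?_) (h1'.add h0')
  rw [norm_mul, norm_pow, Complex.norm_real, Real.norm_eq_abs,
    _root_.abs_of_nonneg (binc_nonneg hβ0 k)]
  have := binc_le hβ0 hβ2 k
  have h2 : (0:ℝ) ≤ ‖q‖ ^ k := by positivity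
  nlinarith

lemma summable_binc {β : ℝ} (hβ0 : 0 < β) (hβ2 : β ≤ 2) {q : ℂ} (hq : ‖q‖ < 1) :
    Summable (fun k : ℕ => (binc β k : ℂ) * q ^ k) :=
  (summable_binc_norm hβ0 hβ2 hq).of_norm

lemma summable_binc_deriv {β : ℝ} (hβ0 : 0 < β) (hβ2 : β ≤ 2) {q : ℂ} (hq : ‖q‖ < 1) :
    Summable (fun k : ℕ => (binc β k : ℂ) * ((k : ℂ) * q ^ (k - 1))) := by
  apply Summable.of_norm
  refine Summable.of_nonneg_of_le (fun k => norm_nonneg _) (fun k => ?_)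
    (summable_aux (norm_nonneg q) hq)
  rw [norm_mul, norm_mul, norm_pow, Complex.norm_real, Complex.norm_natCast,
    Real.norm_eq_abs, _root_.abs_of_nonneg (binc_nonneg hβ0 k)]
  have h1 := binc_le hβ0 hβ2 k
  have h2 : (0:ℝ) ≤ ‖q‖ ^ (k-1) := by positivity
  have h3 : (0:ℝ) ≤ (k:ℝ) := by positivity
  have h4 := mul_le_mul_of_nonneg_right h1 (mul_nonneg h3 h2)
  calc binc β k * ((k:ℝ) * ‖q‖ ^ (k-1)) ≤ ((k:ℝ)+1) * ((k:ℝ) * ‖q‖ ^ (k-1)) := h4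
    _ = ((k:ℝ)+1) * (k:ℝ) * ‖q‖ ^ (k-1) := by ring

noncomputable def bincF (β : ℝ) (q : ℂ) : ℂ := ∑' k : ℕ, (binc β k : ℂ) * q ^ k

lemma hasDerivAt_bincF {β : ℝ} (hβ0 : 0 < β) (hβ2 : β ≤ 2) {q : ℂ} (hq : ‖q‖ < 1) :
    HasDerivAt (bincF β) (∑' k : ℕ, (binc β k : ℂ) * ((k : ℂ) * q ^ (k - 1))) q := by
  set r : ℝ := (‖q‖ + 1) / 2 with hr
  have hr0 : 0 < r := by positivity
  have hqr : ‖q‖ < r := by rw [hr]; linarith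
  have hr1 : r < 1 := by rw [hr]; linarith
  have := hasDerivAt_tsum_of_isPreconnected (F := ℂ)
    (u := fun k : ℕ => ((k:ℝ) + 1) * k * r ^ (k - 1))
    (g := fun k y => (binc β k : ℂ) * y ^ k)
    (g' := fun k y => (binc β k : ℂ) * ((k : ℂ) * y ^ (k - 1)))
    (summable_aux hr0.le hr1) Metric.isOpen_ball
    ((convex_ball (0:ℂ) r).isPreconnected)
    (fun n y _ => (hasDerivAt_pow n y).const_mul _)
    (fun n y hy => ?_) (y₀ := 0) (by simpa using hr0)
    (summable_binc hβ0 hβ2 (by norm_num)) (y := q) (by simpa using hqr)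
  · exact this
  · rw [mem_ball_zero_iff] at hy
    rw [norm_mul, norm_mul, norm_pow, Complex.norm_real, Complex.norm_natCast,
      Real.norm_eq_abs, _root_.abs_of_nonneg (binc_nonneg hβ0 n)]
    have h1 := binc_le hβ0 hβ2 n
    have h2 : ‖y‖ ^ (n-1) ≤ r ^ (n-1) := pow_le_pow_left₀ (norm_nonneg y) hy.le _
    have h3 : (0:ℝ) ≤ (n:ℝ) := by positivity
    calc binc β n * ((n:ℝ) * ‖y‖ ^ (n-1))
        ≤ ((n:ℝ)+1) * ((n:ℝ) * r ^ (n-1)) := by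
          apply mul_le_mul h1 (by nlinarith [norm_nonneg y, pow_nonneg (norm_nonneg y) (n-1)])
            (by positivity) (by positivity)
      _ = ((n:ℝ)+1) * (n:ℝ) * r ^ (n-1) := by ring

lemma bincF_ode {β : ℝ} (hβ0 : 0 < β) (hβ2 : β ≤ 2) {q : ℂ} (hq : ‖q‖ < 1) :
    (1 - q) * (∑' k : ℕ, (binc β k : ℂ) * ((k : ℂ) * q ^ (k - 1)))
      = (β : ℂ) * bincF β q := by
  set D := ∑' k : ℕ, (binc β k : ℂ) * ((k : ℂ) * q ^ (k - 1)) with hD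
  have h1 : HasSum (fun k : ℕ => (binc β k : ℂ) * ((k : ℂ) * q ^ (k - 1))) D :=
    (summable_binc_deriv hβ0 hβ2 hq).hasSum
  have h2 : HasSum (fun k : ℕ => (binc β (k+1) : ℂ) * (((k : ℂ)+1) * q ^ k)) D := by
    have := (hasSum_nat_add_iff' 1).2 h1
    simpa using this
  have h3 : HasSum (fun k : ℕ => ((binc β k * (β + k) : ℝ) : ℂ) * q ^ k) D := by
    refine HasSum.congr_fun h2 fun k => ?_
    have hb := binc_succ β k
    push_cast
    rw [show ((binc β (k+1) : ℝ):ℂ) * (((k:ℂ)+1) * q^k)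
        = (((binc β (k+1) * (k+1) : ℝ)):ℂ) * q^k by push_cast; ring, hb]
    push_cast; ring
  have h4 : HasSum (fun k : ℕ => (binc β k : ℂ) * (k : ℂ) * q ^ k) (q * D) := by
    refine HasSum.congr_fun (h1.mul_left q) fun k => ?_
    match k with
    | 0 => simp
    | n+1 => push_cast [pow_succ]; ring
  have h5 : HasSum (fun k : ℕ => (β:ℂ) * ((binc β k : ℂ) * q ^ k)) ((β:ℂ) * bincF β q) :=
    ((summable_binc hβ0 hβ2 hq).hasSum).mul_left _
  have h6 := h3.sub h4
  have h7 : (fun k : ℕ => ((binc β k * (β + k) : ℝ) : ℂ) * q ^ k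
      - (binc β k : ℂ) * (k : ℂ) * q ^ k)
      = fun k : ℕ => (β:ℂ) * ((binc β k : ℂ) * q ^ k) := by
    funext k; push_cast; ring
  rw [h7] at h6
  rw [h5.unique h6]; ring

lemma one_sub_re_pos {x : ℂ} (hx : ‖x‖ < 1) : 0 < (1 - x).re := by
  have h1 : x.re ≤ ‖x‖ := by simpa using Complex.re_le_norm x
  simp only [Complex.sub_re, Complex.one_re]
  linarith

lemma one_sub_ne_zero {x : ℂ} (hx : ‖x‖ < 1) : 1 - x ≠ 0 := by
  intro h
  have := one_sub_re_pos hx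
  rw [h] at this; simp at this

theorem hasSum_binc {β : ℝ} (hβ0 : 0 < β) (hβ2 : β ≤ 2) {q : ℂ} (hq : ‖q‖ < 1) :
    HasSum (fun k : ℕ => (binc β k : ℂ) * q ^ k) ((1 - q) ^ (-(β:ℂ))) := by
  have hH : ∀ x : ℂ, ‖x‖ < 1 →
      HasDerivAt (fun y => bincF β y * (1-y) ^ (β:ℂ)) 0 x := by
    intro x hx
    have hF := hasDerivAt_bincF hβ0 hβ2 hx
    have hslit : (1 - x) ∈ Complex.slitPlane := Or.inl (one_sub_re_pos hx)
    have hg : HasDerivAt (fun y : ℂ => (1-y) ^ (β:ℂ))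
        ((β:ℂ) * (1-x) ^ ((β:ℂ)-1) * (-1)) x :=
      HasDerivAt.cpow_const ((hasDerivAt_id x).const_sub 1) hslit
    have hmul := hF.mul hg
    convert hmul using 1
    · rfl
    · rfl
    · rfl
    have hpow : (1-x) ^ (β:ℂ) = (1-x) ^ ((β:ℂ)-1) * (1-x) := by
      conv_lhs => rw [show (β:ℂ) = ((β:ℂ)-1) + 1 by ring]
      rw [cpow_add _ _ (one_sub_ne_zero hx), cpow_one]
    have hode := bincF_ode hβ0 hβ2 hx
    rw [hpow]
    have : (∑' k : ℕ, (binc β k : ℂ) * ((k : ℂ) * x ^ (k - 1))) * ((1-x)^((β:ℂ)-1) * (1-x))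
        + bincF β x * ((β:ℂ) * (1-x)^((β:ℂ)-1) * (-1))
        = (1-x)^((β:ℂ)-1) *
          ((1-x) * (∑' k : ℕ, (binc β k : ℂ) * ((k : ℂ) * x ^ (k - 1))) - (β:ℂ) * bincF β x) := by
      ring
    rw [this, hode]
    ring
  have key : ∀ x : ℂ, ‖x‖ < 1 → bincF β x * (1-x) ^ (β:ℂ) = 1 := by
    intro x hx
    set H : ℂ → ℂ := fun y => bincF β y * (1-y) ^ (β:ℂ) with hHdef
    have hdiff : DifferentiableOn ℂ H (Metric.ball (0:ℂ) 1) := fun y hy =>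
      ((hH y (by simpa using hy)).differentiableAt).differentiableWithinAt
    have hz : ∀ y ∈ Metric.ball (0:ℂ) 1, fderivWithin ℂ H (Metric.ball (0:ℂ) 1) y = 0 := by
      intro y hy
      rw [fderivWithin_of_isOpen Metric.isOpen_ball hy]
      have := (hH y (by simpa using hy)).hasFDerivAt.fderiv
      rw [this]
      ext u
      simp
    have hx1 : x ∈ Metric.ball (0:ℂ) 1 := by simpa using hx
    have h01 : (0:ℂ) ∈ Metric.ball (0:ℂ) 1 := by simp
    have hcst := (convex_ball (0:ℂ) 1).is_const_of_fderivWithin_eq_zero hdiff hz hx1 h01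
    have hH0 : H 0 = 1 := by
      have hF0 : bincF β 0 = 1 := by
        rw [bincF, tsum_eq_single 0 (fun k hk => by simp [zero_pow hk])]
        simp [binc_zero]
      simp [hHdef, hF0]
    show H x = 1
    rw [hcst, hH0]
  have hPne : (1-q) ^ (β:ℂ) ≠ 0 := by
    rw [Ne, cpow_eq_zero_iff]
    intro h
    exact one_sub_ne_zero hq h.1
  have hFq : bincF β q = (1-q) ^ (-(β:ℂ)) := by
    rw [cpow_neg]
    exact eq_inv_of_mul_eq_one_left (key q hq)
  have := (summable_binc hβ0 hβ2 hq).hasSum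
  rwa [← bincF, hFq] at this

lemma ne_zero_of_re_pos' {x : ℂ} (hx : 0 < x.re) : x ≠ 0 := by
  intro h; rw [h] at hx; simp at hx

lemma log_mul₄ {d : ℝ} (hd : 0 < d) {a b c : ℂ} (ha : 0 < a.re) (hb : 0 < b.re)
    (hc : 0 < c.re) (h : 0 < ((d:ℂ) * a * b * c).re) :
    Complex.log ((d:ℂ) * a * b * c)
      = Complex.log d + Complex.log a + Complex.log b + Complex.log c := by
  have hdne : (d:ℂ) ≠ 0 := by exact_mod_cast hd.ne'
  have hane := ne_zero_of_re_pos' ha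
  have hbne := ne_zero_of_re_pos' hb
  have hcne := ne_zero_of_re_pos' hc
  have hPne : (d:ℂ) * a * b * c ≠ 0 := by
    exact mul_ne_zero (mul_ne_zero (mul_ne_zero hdne hane) hbne) hcne
  have hexp : Complex.exp (Complex.log ((d:ℂ) * a * b * c))
      = Complex.exp (Complex.log d + Complex.log a + Complex.log b + Complex.log c) := by
    rw [Complex.exp_log hPne, Complex.exp_add, Complex.exp_add, Complex.exp_add,
      Complex.exp_log hdne, Complex.exp_log hane, Complex.exp_log hbne, Complex.exp_log hcne]
  obtain ⟨n, hn⟩ := Complex.exp_eq_exp_iff_exists_int.1 hexp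
  have him := congrArg Complex.im hn
  simp only [Complex.add_im, Complex.log_im, Complex.mul_im, Complex.mul_re,
    Complex.intCast_re, Complex.intCast_im, Complex.I_re, Complex.I_im,
    Complex.ofReal_re, Complex.ofReal_im, Complex.re_ofNat, Complex.im_ofNat,
    mul_zero, zero_mul, mul_one, sub_zero, add_zero, zero_add] at him
  -- him : arg (d*a*b*c) = arg d + arg a + arg b + arg c + n * (2π)
  have hargd : Complex.arg (d:ℂ) = 0 := Complex.arg_ofReal_of_nonneg hd.le
  have hP : |Complex.arg ((d:ℂ) * a * b * c)| < π / 2 :=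
    Complex.abs_arg_lt_pi_div_two_iff.2 (Or.inl h)
  have hA : |Complex.arg a| < π / 2 := Complex.abs_arg_lt_pi_div_two_iff.2 (Or.inl ha)
  have hB : |Complex.arg b| < π / 2 := Complex.abs_arg_lt_pi_div_two_iff.2 (Or.inl hb)
  have hC : |Complex.arg c| < π / 2 := Complex.abs_arg_lt_pi_div_two_iff.2 (Or.inl hc)
  have hpi : 0 < π := Real.pi_pos
  have hn0 : n = 0 := by
    by_contra hne0
    rcases abs_lt.1 hP with ⟨hP1, hP2⟩
    rcases abs_lt.1 hA with ⟨hA1, hA2⟩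
    rcases abs_lt.1 hB with ⟨hB1, hB2⟩
    rcases abs_lt.1 hC with ⟨hC1, hC2⟩
    have h1le : (1:ℝ) ≤ |(n:ℝ)| := by
      have := Int.one_le_abs (by omega : n ≠ 0)
      exact_mod_cast this
    have habs : |(n:ℝ) * (2*π)| < 2*π := by
      rw [abs_lt]
      rw [hargd] at him
      constructor <;> nlinarith [him]
    rw [abs_mul, _root_.abs_of_pos (by positivity : (0:ℝ) < 2*π)] at habs
    nlinarith
  rw [hn0] at hn
  simpa using hn

lemma cpow_mul₄ (s : ℂ) {d : ℝ} (hd : 0 < d) {a b c : ℂ} (ha : 0 < a.re)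
    (hb : 0 < b.re) (hc : 0 < c.re) (h : 0 < ((d:ℂ) * a * b * c).re) :
    ((d:ℂ) * a * b * c) ^ s = (d:ℂ) ^ s * a ^ s * b ^ s * c ^ s := by
  have hdne : (d:ℂ) ≠ 0 := by exact_mod_cast hd.ne'
  have hane := ne_zero_of_re_pos' ha
  have hbne := ne_zero_of_re_pos' hb
  have hcne := ne_zero_of_re_pos' hc
  have hPne : (d:ℂ) * a * b * c ≠ 0 :=
    mul_ne_zero (mul_ne_zero (mul_ne_zero hdne hane) hbne) hcne
  rw [Complex.cpow_def_of_ne_zero hPne, Complex.cpow_def_of_ne_zero hdne,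
    Complex.cpow_def_of_ne_zero hane, Complex.cpow_def_of_ne_zero hbne,
    Complex.cpow_def_of_ne_zero hcne, log_mul₄ hd ha hb hc h,
    add_mul, add_mul, add_mul, Complex.exp_add, Complex.exp_add, Complex.exp_add]


/-- The functions `f_k` in the series expansion of the analytic fBm covariance. -/
noncomputable def afbmCoeff (α : ℝ) (k : ℕ) (z : ℂ) : ℂ :=
  (2 : ℂ) ^ ((α : ℂ) - 1) *
    (Real.sqrt (α * (1 - 2 * α) * ((ascPochhammer ℝ k).eval (2 - 2 * α)) /
      (2 * Real.cos (π * α) * (Nat.factorial k))) : ℂ) *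
    ((z + I) / (2 * I)) ^ (2 * (α : ℂ) - 2) *
    ((z - I) / (z + I)) ^ k

/-- For `z, w` in the upper half-plane, `∑_k f_k(z) \overline{f_k(w)}` converges absolutely
to `(α(1−2α)/(2 cos πα)) (−i(z − \bar w))^{2α−2}`. -/
theorem stmt3 (α : ℝ) (hα : α ∈ Set.Ioo (0 : ℝ) (1 / 2)) (z w : ℂ)
    (hz : 0 < z.im) (hw : 0 < w.im) :
    Summable (fun k => ‖afbmCoeff α k z * (starRingEnd ℂ) (afbmCoeff α k w)‖) ∧
    ∑' k, afbmCoeff α k z * (starRingEnd ℂ) (afbmCoeff α k w) =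
      ((α * (1 - 2 * α) / (2 * Real.cos (π * α))) : ℂ) *
        (-I * (z - (starRingEnd ℂ) w)) ^ (2 * (α : ℂ) - 2) := by
  obtain ⟨hα0, hα2⟩ := hα
  have hpi := Real.pi_pos
  have hcos : 0 < Real.cos (π * α) := by
    apply Real.cos_pos_of_mem_Ioo
    constructor
    · nlinarith
    · nlinarith
  set β : ℝ := 2 - 2 * α with hβ
  have hβ0 : 0 < β := by rw [hβ]; linarith
  have hβ2 : β ≤ 2 := by rw [hβ]; linarith
  set C : ℝ := α * (1 - 2 * α) / (2 * Real.cos (π * α)) with hCdef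
  have hC0 : 0 ≤ C := by
    apply div_nonneg (by nlinarith) (by positivity)
  have hCc : ∀ k : ℕ, α * (1 - 2 * α) * ((ascPochhammer ℝ k).eval (2 - 2 * α)) /
      (2 * Real.cos (π * α) * (Nat.factorial k)) = C * binc β k := by
    intro k
    have hf : (0:ℝ) < (Nat.factorial k : ℝ) := by positivity
    rw [hCdef, binc, hβ]
    field_simp
  set s : ℂ := 2 * (α : ℂ) - 2 with hs
  have hs_real : s = ((2 * α - 2 : ℝ) : ℂ) := by rw [hs]; push_cast; ring
  have hconj_s : (starRingEnd ℂ) s = s := by rw [hs_real, Complex.conj_ofReal]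
  set W : ℂ := (starRingEnd ℂ) w with hW
  have hWim : W.im = -w.im := by rw [hW, Complex.conj_im]
  have hWre : W.re = w.re := by rw [hW, Complex.conj_re]
  have hzI : z + I ≠ 0 := by
    intro h; have := congrArg Complex.im h; simp at this; linarith
  have hwI : w + I ≠ 0 := by
    intro h; have := congrArg Complex.im h; simp at this; linarith
  have hWI : W - I ≠ 0 := by
    intro h; have := congrArg Complex.im h
    simp only [Complex.sub_im, Complex.I_im, Complex.zero_im] at this
    rw [hWim] at this; linarith
  set Z : ℂ := (z + I) / (2 * I) with hZ
  set Wc : ℂ := (W - I) / (-(2 * I)) with hWc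
  set Q : ℂ := ((z - I) / (z + I)) * ((W + I) / (W - I)) with hQdef
  have hZre : 0 < Z.re := by
    rw [hZ, Complex.div_re]
    simp [Complex.normSq_apply]
    nlinarith
  have hWcre : 0 < Wc.re := by
    rw [hWc, Complex.div_re]
    simp [Complex.normSq_apply]
    have : W.im = -w.im := hWim
    nlinarith [this]
  have hζwre : 0 < ((w + I) / (2 * I)).re := by
    rw [Complex.div_re]
    simp [Complex.normSq_apply]
    nlinarith
  have hpz : ‖(z - I) / (z + I)‖ < 1 := by
    rw [norm_div, div_lt_one (norm_pos_iff.mpr hzI)]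
    apply lt_of_pow_lt_pow_left₀ 2 (norm_nonneg _)
    rw [Complex.sq_norm, Complex.sq_norm]
    simp [Complex.normSq_apply]
    nlinarith
  have hqw : ‖(W + I) / (W - I)‖ < 1 := by
    rw [norm_div, div_lt_one (norm_pos_iff.mpr hWI)]
    apply lt_of_pow_lt_pow_left₀ 2 (norm_nonneg _)
    rw [Complex.sq_norm, Complex.sq_norm]
    simp [Complex.normSq_apply]
    nlinarith [hWim]
  have hQ : ‖Q‖ < 1 := by
    rw [hQdef, norm_mul]
    nlinarith [norm_nonneg ((z - I) / (z + I)), norm_nonneg ((W + I) / (W - I))]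
  have h1Q : 0 < (1 - Q).re := one_sub_re_pos hQ
  have hY : 0 < (-I * (z - W)).re := by
    simp [Complex.mul_re, Complex.sub_im, hWim]
    linarith
  have hprod : ((2:ℝ):ℂ) * Z * Wc * (1 - Q) = -I * (z - W) := by
    rw [hZ, hWc, hQdef]
    field_simp
    push_cast
    linear_combination (4*z*I - 4*I*W) * Complex.I_sq
  -- conjugation facts
  have h2c : (2:ℂ) ^ ((α:ℂ) - 1) = (((2:ℝ) ^ (α - 1) : ℝ) : ℂ) := by
    rw [Complex.ofReal_cpow (by norm_num : (0:ℝ) ≤ 2)]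
    push_cast
    ring_nf
  have hconjζw : (starRingEnd ℂ) (((w + I) / (2 * I)) ^ s) = Wc ^ s := by
    have harg : ((w + I) / (2 * I)).arg ≠ π := by
      intro h
      rw [Complex.arg_eq_pi_iff] at h
      linarith [h.1]
    have hc := Complex.conj_cpow ((w + I) / (2 * I)) s harg
    rw [hconj_s] at hc
    rw [← hc]
    congr 1
    rw [hWc, hW, map_div₀, map_add, map_mul]
    simp only [Complex.conj_I, map_ofNat]
    ring_nf
  -- the key term identity
  set K : ℂ := (C : ℂ) * (((2:ℝ) ^ (2 * α - 2) : ℝ) : ℂ) * (Z ^ s * Wc ^ s) with hK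
  have key : ∀ k : ℕ, afbmCoeff α k z * (starRingEnd ℂ) (afbmCoeff α k w)
      = K * ((binc β k : ℂ) * Q ^ k) := by
    intro k
    unfold afbmCoeff
    rw [hCc k, ← hs, ← hZ]
    rw [map_mul, map_mul, map_mul]
    rw [h2c, Complex.conj_ofReal, Complex.conj_ofReal, hconjζw, map_pow]
    have hconjpw : (starRingEnd ℂ) ((w - I) / (w + I)) = (W + I) / (W - I) := by
      rw [hW, map_div₀, map_sub, map_add]
      simp only [Complex.conj_I]
      ring_nf
    rw [hconjpw]
    have hsq : ((Real.sqrt (C * binc β k) : ℝ) : ℂ) * ((Real.sqrt (C * binc β k) : ℝ) : ℂ)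
        = (C : ℂ) * (binc β k : ℂ) := by
      rw [← Complex.ofReal_mul, Real.mul_self_sqrt (mul_nonneg hC0 (binc_nonneg hβ0 k))]
      push_cast; ring
    have h2two : (((2:ℝ) ^ (α - 1) : ℝ) : ℂ) * (((2:ℝ) ^ (α - 1) : ℝ) : ℂ)
        = (((2:ℝ) ^ (2 * α - 2) : ℝ) : ℂ) := by
      rw [← Complex.ofReal_mul, ← Real.rpow_add (by norm_num : (0:ℝ) < 2)]
      norm_num
      ring_nf
    calc (((2:ℝ) ^ (α - 1) : ℝ) : ℂ) * ((Real.sqrt (C * binc β k) : ℝ) : ℂ) * Z ^ s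
          * ((z - I) / (z + I)) ^ k
          * ((((2:ℝ) ^ (α - 1) : ℝ) : ℂ) * ((Real.sqrt (C * binc β k) : ℝ) : ℂ) * Wc ^ s
          * ((W + I) / (W - I)) ^ k)
        = ((((2:ℝ) ^ (α - 1) : ℝ) : ℂ) * (((2:ℝ) ^ (α - 1) : ℝ) : ℂ))
          * (((Real.sqrt (C * binc β k) : ℝ) : ℂ) * ((Real.sqrt (C * binc β k) : ℝ) : ℂ))
          * (Z ^ s * Wc ^ s) * (((z - I) / (z + I)) ^ k * ((W + I) / (W - I)) ^ k) := by
          ring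
      _ = K * ((binc β k : ℂ) * Q ^ k) := by
          rw [h2two, hsq, hK, hQdef, ← mul_pow]
          ring
  have hQsum := hasSum_binc hβ0 hβ2 hQ
  constructor
  · simp only [key]
    have h1 := (summable_binc_norm hβ0 hβ2 hQ).mul_left ‖K‖
    apply h1.congr
    intro k
    exact (norm_mul _ _).symm
  · rw [tsum_congr key, tsum_mul_left, hQsum.tsum_eq]
    have hsb : -((β:ℝ):ℂ) = s := by
      rw [hs_real, hβ]; push_cast; ring
    rw [hsb]
    have hT2 : (((2:ℝ) ^ (2 * α - 2) : ℝ) : ℂ) = ((2:ℝ):ℂ) ^ s := by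
      rw [hs_real, ← Complex.ofReal_cpow (by norm_num : (0:ℝ) ≤ 2)]
    have hcp := cpow_mul₄ s (by norm_num : (0:ℝ) < 2) hZre hWcre h1Q (hprod ▸ hY)
    rw [hprod] at hcp
    rw [hK, hT2]
    calc (C : ℂ) * (((2:ℝ):ℂ) ^ s) * (Z ^ s * Wc ^ s) * (1 - Q) ^ s
        = (C : ℂ) * (((2:ℝ):ℂ) ^ s * Z ^ s * Wc ^ s * (1 - Q) ^ s) := by ring
      _ = (C : ℂ) * (-I * (z - W)) ^ s := by rw [← hcp]
      _ = ((α * (1 - 2 * α) / (2 * Real.cos (π * α))) : ℂ) * (-I * (z - W)) ^ s := by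
          rw [hCdef]; push_cast; ring
end

section
/- Let α ∈ (0,1/2), ε, η > 0, ρ ∈ (0,1), and z ∈ ℂ with Re z > 0. Then |(z+ε)^{2α−2} − (z+η)^{2α−2}| ≤ C |ε−η|^ρ |z|^{2α−2−ρ}, for a constant C depending only on α and ρ, where w^{2α−2} denotes the principal branch power on the right half-plane. -/
open Complex

/-- For `Re z > 0`, `|(z+ε)^{2α−2} − (z+η)^{2α−2}| ≤ C |ε−η|^ρ |z|^{2α−2−ρ}`,
with `C` depending only on `α ∈ (0,1/2)` and `ρ ∈ (0,1)`. -/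
theorem stmt4 (α ρ : ℝ) (hα : α ∈ Set.Ioo (0 : ℝ) (1 / 2)) (hρ : ρ ∈ Set.Ioo (0 : ℝ) 1) :
    ∃ C > 0, ∀ ε η : ℝ, 0 < ε → 0 < η → ∀ z : ℂ, 0 < z.re →
      ‖(z + ε) ^ (2 * (α : ℂ) - 2) - (z + η) ^ (2 * (α : ℂ) - 2)‖
        ≤ C * |ε - η| ^ ρ * ‖z‖ ^ (2 * α - 2 - ρ) := by
  obtain ⟨hα0, hα1⟩ := hα
  obtain ⟨hρ0, hρ1⟩ := hρ
  set s : ℂ := 2 * (α : ℂ) - 2 with hsdef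
  have hs_eq : s = ((2 * α - 2 : ℝ) : ℂ) := by push_cast [hsdef]; ring
  have hsre : s.re = 2 * α - 2 := by rw [hs_eq]; simp
  have hsim : s.im = 0 := by rw [hs_eq]; simp
  refine ⟨2, by norm_num, ?_⟩
  intro ε η hε hη z hz
  have hzne : z ≠ 0 := by
    intro h; rw [h] at hz; simp at hz
  have hzabs : 0 < ‖z‖ := norm_pos_iff.mpr hzne
  have hre : ∀ t : ℝ, 0 < t → 0 < (z + t).re := by
    intro t ht; simp only [Complex.add_re, Complex.ofReal_re]; linarith
  have hne : ∀ t : ℝ, 0 < t → z + (t : ℂ) ≠ 0 := by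
    intro t ht h
    have := hre t ht
    rw [h] at this; simp at this
  have habs_mono : ∀ t : ℝ, 0 ≤ t → ‖z‖ ≤ ‖z + t‖ := by
    intro t ht
    rw [Complex.norm_def, Complex.norm_def]
    apply Real.sqrt_le_sqrt
    simp only [Complex.normSq_apply, Complex.add_re, Complex.add_im, Complex.ofReal_re,
      Complex.ofReal_im, add_zero]
    nlinarith [hz.le]
  have habs_pow : ∀ t : ℝ, 0 < t →
      ‖(z + t) ^ s‖ = ‖z + t‖ ^ (2 * α - 2) := by
    intro t ht
    rw [Complex.norm_cpow_of_ne_zero (hne t ht), hsre, hsim]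
    simp
  have hbound : ∀ t : ℝ, 0 < t →
      ‖(z + t) ^ s‖ ≤ ‖z‖ ^ (2 * α - 2) := by
    intro t ht
    rw [habs_pow t ht]
    exact Real.rpow_le_rpow_of_nonpos hzabs (habs_mono t ht.le) (by linarith)
  rcases le_or_gt (‖z‖) |ε - η| with hcase | hcase
  · -- |z| ≤ |ε - η| : use the triangle inequality
    have h1 : ‖(z + ε) ^ s - (z + η) ^ s‖
        ≤ 2 * ‖z‖ ^ (2 * α - 2) := by
      calc ‖(z + ε) ^ s - (z + η) ^ s‖
          ≤ ‖(z + ε) ^ s‖ + ‖(z + η) ^ s‖ := by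
            simpa using norm_sub_le ((z + ↑ε) ^ s) ((z + ↑η) ^ s)
        _ ≤ 2 * ‖z‖ ^ (2 * α - 2) := by
            have := hbound ε hε; have := hbound η hη; linarith
    have h2 : ‖z‖ ^ (2 * α - 2)
        ≤ |ε - η| ^ ρ * ‖z‖ ^ (2 * α - 2 - ρ) := by
      have : ‖z‖ ^ (2 * α - 2) =
          ‖z‖ ^ ρ * ‖z‖ ^ (2 * α - 2 - ρ) := by
        rw [← Real.rpow_add hzabs]; ring_nf
      rw [this]
      have hzρ : ‖z‖ ^ ρ ≤ |ε - η| ^ ρ :=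
        Real.rpow_le_rpow hzabs.le hcase hρ0.le
      exact mul_le_mul_of_nonneg_right hzρ (Real.rpow_nonneg hzabs.le _)
    calc ‖(z + ε) ^ s - (z + η) ^ s‖
        ≤ 2 * ‖z‖ ^ (2 * α - 2) := h1
      _ ≤ 2 * (|ε - η| ^ ρ * ‖z‖ ^ (2 * α - 2 - ρ)) := by linarith
      _ = 2 * |ε - η| ^ ρ * ‖z‖ ^ (2 * α - 2 - ρ) := by ring
  · -- |ε - η| < |z| : mean value theorem
    rcases eq_or_ne ε η with rfl | hεη
    · simp only [sub_self, norm_zero]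
      positivity
    have hd0 : 0 < |ε - η| := abs_pos.mpr (sub_ne_zero.mpr hεη)
    set m := min ε η with hm
    have hm0 : 0 < m := lt_min hε hη
    set T : Set ℝ := Set.Icc (min ε η) (max ε η) with hT
    have hTpos : ∀ t ∈ T, 0 < t := fun t ht => lt_of_lt_of_le hm0 ht.1
    -- the derivative bound
    have hderiv : ∀ t ∈ T, HasDerivWithinAt (fun u : ℝ => (z + (u : ℂ)) ^ s)
        (s * (z + (t : ℂ)) ^ (s - 1)) T t := by
      intro t ht
      have ht0 := hTpos t ht
      have h1 : HasDerivAt (fun w : ℂ => (z + w) ^ s)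
          (s * (z + (t : ℂ)) ^ (s - 1) * 1) (t : ℂ) := by
        apply HasDerivAt.cpow_const
        · simpa using (hasDerivAt_id (t : ℂ)).const_add z
        · exact Complex.mem_slitPlane_iff.mpr (Or.inl (hre t ht0))
      have h2 := h1.comp_ofReal (z := t)
      simpa using h2.hasDerivWithinAt
    have hdbound : ∀ t ∈ T, ‖s * (z + (t : ℂ)) ^ (s - 1)‖ ≤ 2 * ‖z‖ ^ (2 * α - 3) := by
      intro t ht
      have ht0 := hTpos t ht
      have habs_s : ‖s‖ ≤ 2 := by
        rw [hs_eq, Complex.norm_real, Real.norm_eq_abs, abs_of_nonpos (by linarith)]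
        linarith
      have h3 : ‖(z + (t : ℂ)) ^ (s - 1)‖
          = ‖z + t‖ ^ (2 * α - 3) := by
        rw [Complex.norm_cpow_of_ne_zero (hne t ht0)]
        have e1 : (s - 1).re = 2 * α - 3 := by simp [Complex.sub_re, hsre]; ring
        have e2 : (s - 1).im = 0 := by simp [Complex.sub_im, hsim]
        rw [e1, e2, mul_zero, Real.exp_zero, div_one]
      have h4 : ‖z + t‖ ^ (2 * α - 3) ≤ ‖z‖ ^ (2 * α - 3) :=
        Real.rpow_le_rpow_of_nonpos hzabs (habs_mono t ht0.le) (by linarith)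
      rw [norm_mul, h3]
      have h5 : (0:ℝ) ≤ ‖z + t‖ ^ (2 * α - 3) := Real.rpow_nonneg (by positivity) _
      calc ‖s‖ * ‖z + t‖ ^ (2 * α - 3)
          ≤ 2 * ‖z + t‖ ^ (2 * α - 3) := by
            exact mul_le_mul_of_nonneg_right habs_s h5
        _ ≤ 2 * ‖z‖ ^ (2 * α - 3) := by linarith
    have hconv : Convex ℝ T := convex_Icc _ _
    have hεT : ε ∈ T := ⟨min_le_left _ _, le_max_left _ _⟩
    have hηT : η ∈ T := ⟨min_le_right _ _, le_max_right _ _⟩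
    have hMVT := hconv.norm_image_sub_le_of_norm_hasDerivWithin_le hderiv hdbound hηT hεT
    have hMVT' : ‖(z + ε) ^ s - (z + η) ^ s‖
        ≤ 2 * ‖z‖ ^ (2 * α - 3) * |ε - η| := by
      simpa [Real.norm_eq_abs] using hMVT
    -- now convert d * |z|^{2α-3} into d^ρ * |z|^{2α-2-ρ}
    have hkey : |ε - η| * ‖z‖ ^ (2 * α - 3)
        ≤ |ε - η| ^ ρ * ‖z‖ ^ (2 * α - 2 - ρ) := by
      have hsplit : |ε - η| = |ε - η| ^ ρ * |ε - η| ^ (1 - ρ) := by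
        rw [← Real.rpow_add hd0]; simp
      have h6 : |ε - η| ^ (1 - ρ) ≤ ‖z‖ ^ (1 - ρ) :=
        Real.rpow_le_rpow hd0.le hcase.le (by linarith)
      have h7 : ‖z‖ ^ (1 - ρ) * ‖z‖ ^ (2 * α - 3)
          = ‖z‖ ^ (2 * α - 2 - ρ) := by
        rw [← Real.rpow_add hzabs]; ring_nf
      calc |ε - η| * ‖z‖ ^ (2 * α - 3)
          = |ε - η| ^ ρ * (|ε - η| ^ (1 - ρ) * ‖z‖ ^ (2 * α - 3)) := by
            conv_lhs => rw [hsplit]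
            ring
        _ ≤ |ε - η| ^ ρ * (‖z‖ ^ (1 - ρ) * ‖z‖ ^ (2 * α - 3)) := by
            apply mul_le_mul_of_nonneg_left _ (Real.rpow_nonneg hd0.le _)
            exact mul_le_mul_of_nonneg_right h6 (Real.rpow_nonneg hzabs.le _)
        _ = |ε - η| ^ ρ * ‖z‖ ^ (2 * α - 2 - ρ) := by rw [h7]
    calc ‖(z + ε) ^ s - (z + η) ^ s‖
        ≤ 2 * ‖z‖ ^ (2 * α - 3) * |ε - η| := hMVT'
      _ = 2 * (|ε - η| * ‖z‖ ^ (2 * α - 3)) := by ring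
      _ ≤ 2 * (|ε - η| ^ ρ * ‖z‖ ^ (2 * α - 2 - ρ)) := by linarith
      _ = 2 * |ε - η| ^ ρ * ‖z‖ ^ (2 * α - 2 - ρ) := by ring
end

section
/- Let α ∈ (0,1/2), T > 0, and ρ ∈ (0,2α). Then there exists C_ρ > 0 such that for all s ∈ ℂ with Im s ≥ 0, all L > 0, and all ε > η > 0, one has ∫_0^L ∫_0^L |(2 Im s + x + y + 2ε)^{2α−2} − (2 Im s + x + y + ε+η)^{2α−2}| dx dy ≤ C_ρ L^{2α−ρ} (ε−η)^ρ. -/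
open MeasureTheory

private lemma ptbound (α ρ : ℝ) (hα1 : 0 < α) (hα2 : α < 1/2) (hρ1 : 0 < ρ) (hρ2 : ρ < 2*α)
    (u δ : ℝ) (hu : 0 < u) (hδ : 0 < δ) :
    |(u + δ) ^ (2*α-2) - u ^ (2*α-2)| ≤ (2-2*α)^ρ * δ^ρ * u ^ (2*α-2-ρ) := by
  set β : ℝ := 2*α-2 with hβdef
  have hβneg : β < 0 := by rw [hβdef]; linarith
  have huδ : 0 < u + δ := by linarith
  have hρ1' : ρ < 1 := by linarith
  have h1 : (u+δ)^β ≤ u^β := Real.rpow_le_rpow_of_nonpos hu (by linarith) hβneg.le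
  rw [abs_of_nonpos (by linarith)]
  set D : ℝ := u^β - (u+δ)^β with hDdef
  have hrw : -((u + δ) ^ β - u ^ β) = D := by rw [hDdef]; ring
  rw [hrw]
  have hD0 : 0 ≤ D := by rw [hDdef]; linarith
  have hD1 : D ≤ u ^ β := by
    have := Real.rpow_nonneg huδ.le β
    rw [hDdef]; linarith
  have hD2 : D ≤ ((2-2*α) * u^(β-1)) * δ := by
    have hder : ∀ t ∈ Set.Ici u, HasDerivWithinAt (fun t : ℝ => t ^ β)
        (β * t ^ (β-1)) (Set.Ici u) t := by
      intro t ht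
      exact (Real.hasDerivAt_rpow_const (Or.inl (lt_of_lt_of_le hu ht).ne')).hasDerivWithinAt
    have hbound : ∀ t ∈ Set.Ici u, ‖β * t ^ (β-1)‖ ≤ (2-2*α) * u^(β-1) := by
      intro t ht
      have ht0 : 0 < t := lt_of_lt_of_le hu ht
      rw [norm_mul, Real.norm_eq_abs, Real.norm_eq_abs, abs_of_neg hβneg,
        abs_of_nonneg (Real.rpow_nonneg ht0.le _)]
      have h2 : t ^ (β-1) ≤ u ^ (β-1) :=
        Real.rpow_le_rpow_of_nonpos hu ht (by linarith)
      have h3 : -β = 2-2*α := by rw [hβdef]; ring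
      rw [h3]
      have h4 : (0:ℝ) < 2-2*α := by linarith
      nlinarith [Real.rpow_nonneg ht0.le (β-1)]
    have key := Convex.norm_image_sub_le_of_norm_hasDerivWithin_le hder hbound
      (convex_Ici u) (Set.self_mem_Ici) (by simp [le_of_lt hδ] : u + δ ∈ Set.Ici u)
    rw [Real.norm_eq_abs, Real.norm_eq_abs, abs_of_nonpos (by linarith),
      show u + δ - u = δ by ring, abs_of_pos hδ] at key
    rw [hDdef]; linarith
  -- interpolation
  rcases eq_or_lt_of_le hD0 with hD | hD
  · rw [← hD]
    have h4 : (0:ℝ) ≤ 2-2*α := by linarith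
    exact mul_nonneg (mul_nonneg (Real.rpow_nonneg h4 ρ) (Real.rpow_nonneg hδ.le ρ))
      (Real.rpow_nonneg hu.le _)
  · have hA : (0:ℝ) < u ^ β := Real.rpow_pos_of_pos hu β
    have hB : (0:ℝ) < (2-2*α) * u^(β-1) * δ := by
      have : (0:ℝ) < u^(β-1) := Real.rpow_pos_of_pos hu _
      have h4 : (0:ℝ) < 2-2*α := by linarith
      positivity
    have hsplit : D = D ^ (1-ρ) * D ^ ρ := by
      rw [← Real.rpow_add hD]
      norm_num
    have hle1 : D ^ (1-ρ) ≤ (u^β) ^ (1-ρ) :=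
      Real.rpow_le_rpow hD0 hD1 (by linarith)
    have hle2 : D ^ ρ ≤ ((2-2*α) * u^(β-1) * δ) ^ ρ :=
      Real.rpow_le_rpow hD0 hD2 hρ1.le
    have hmul : D ≤ (u^β) ^ (1-ρ) * ((2-2*α) * u^(β-1) * δ) ^ ρ := by
      rw [hsplit]
      exact mul_le_mul hle1 hle2 (Real.rpow_nonneg hD0 ρ) (Real.rpow_nonneg hA.le _)
    refine hmul.trans (le_of_eq ?_)
    have h4 : (0:ℝ) ≤ 2-2*α := by linarith
    rw [Real.mul_rpow (by positivity) hδ.le, Real.mul_rpow h4 (Real.rpow_nonneg hu.le _),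
      ← Real.rpow_mul hu.le, ← Real.rpow_mul hu.le]
    have hexp : β*(1-ρ) + (β-1)*ρ = β - ρ := by ring
    calc u ^ (β*(1-ρ)) * ((2-2*α)^ρ * u^((β-1)*ρ) * δ^ρ)
        = (2-2*α)^ρ * δ^ρ * (u^(β*(1-ρ)) * u^((β-1)*ρ)) := by ring
      _ = (2-2*α)^ρ * δ^ρ * u ^ (β-ρ) := by rw [← Real.rpow_add hu, hexp]

private lemma innerint (e c' L : ℝ) (he1 : e + 1 < 0) (hc' : 0 < c') (hL : 0 < L) :
    (∫ y in (0:ℝ)..L, (c' + y) ^ e) ≤ c' ^ (e+1) / (-(e+1)) := by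
  rw [intervalIntegral.integral_comp_add_left (fun t : ℝ => t ^ e) c']
  rw [integral_rpow (Or.inr ⟨by linarith, Set.notMem_uIcc_of_lt (by linarith) (by linarith)⟩)]
  rw [add_zero]
  have hP : 0 ≤ (c' + L) ^ (e+1) := Real.rpow_nonneg (by linarith) _
  rw [show ((c'+L)^(e+1) - c'^(e+1)) / (e+1)
      = (c'^(e+1) - (c'+L)^(e+1)) / (-(e+1)) by
    rw [div_neg, ← neg_div, neg_sub]]
  have hpos : (0:ℝ) ≤ -(e+1) := by linarith
  exact div_le_div_of_nonneg_right (by linarith) hpos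

/-- For `ρ ∈ (0, 2α)`, the double integral of
`|(2 Im s + x + y + 2ε)^{2α−2} − (2 Im s + x + y + ε+η)^{2α−2}|` over `[0,L]²`
is bounded by `C_ρ L^{2α−ρ} (ε−η)^ρ`. -/
theorem stmt5 (α ρ : ℝ) (hα : α ∈ Set.Ioo (0 : ℝ) (1 / 2)) (hρ : ρ ∈ Set.Ioo 0 (2 * α)) :
    ∃ C > 0, ∀ s : ℂ, 0 ≤ s.im → ∀ L : ℝ, 0 < L → ∀ ε η : ℝ, 0 < η → η < ε →
      (∫ x in (0:ℝ)..L, ∫ y in (0:ℝ)..L,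
        |(2 * s.im + x + y + 2 * ε) ^ (2 * α - 2)
          - (2 * s.im + x + y + ε + η) ^ (2 * α - 2)|)
        ≤ C * L ^ (2 * α - ρ) * (ε - η) ^ ρ := by
  obtain ⟨hα1, hα2⟩ := hα
  obtain ⟨hρ1, hρ2⟩ := hρ
  have hK : (0:ℝ) < (2-2*α)^ρ := Real.rpow_pos_of_pos (by linarith) ρ
  have he1 : 2*α-1-ρ < 0 := by linarith
  have he1' : (0:ℝ) < -(2*α-1-ρ) := by linarith
  have he2 : (0:ℝ) < 2*α-ρ := by linarith
  refine ⟨(2-2*α)^ρ / ((-(2*α-1-ρ)) * (2*α-ρ)), by positivity, ?_⟩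
  intro s hs L hL ε η hη hεη
  have hδ : (0:ℝ) < ε - η := by linarith
  have hδρ : (0:ℝ) ≤ (ε - η)^ρ := Real.rpow_nonneg hδ.le ρ
  have hc : (0:ℝ) < 2*s.im + ε + η := by linarith
  -- pointwise bound
  have hpt : ∀ x ∈ Set.Icc (0:ℝ) L, ∀ y ∈ Set.Icc (0:ℝ) L,
      |(2*s.im + x + y + 2*ε)^(2*α-2) - (2*s.im + x + y + ε + η)^(2*α-2)|
        ≤ (2-2*α)^ρ * (ε-η)^ρ * ((2*s.im + ε + η + x) + y)^(2*α-2-ρ) := by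
    intro x hx y hy
    have hu : 0 < (2*s.im + ε + η + x) + y := by linarith [hx.1, hy.1]
    have h1 : 2*s.im + x + y + 2*ε = ((2*s.im + ε + η + x) + y) + (ε - η) := by ring
    have h2 : 2*s.im + x + y + ε + η = (2*s.im + ε + η + x) + y := by ring
    rw [h1, h2]
    exact ptbound α ρ hα1 hα2 hρ1 hρ2 _ _ hu hδ
  -- inner integral bound
  have inner : ∀ x ∈ Set.Icc (0:ℝ) L,
      (∫ y in (0:ℝ)..L,
        |(2*s.im + x + y + 2*ε)^(2*α-2) - (2*s.im + x + y + ε + η)^(2*α-2)|)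
        ≤ (2-2*α)^ρ * (ε-η)^ρ * ((2*s.im + ε + η + x)^(2*α-1-ρ) / (-(2*α-1-ρ))) := by
    intro x hx
    have hcx : 0 < 2*s.im + ε + η + x := by linarith [hx.1]
    have hint1 : IntervalIntegrable (fun y : ℝ =>
        |(2*s.im + x + y + 2*ε)^(2*α-2) - (2*s.im + x + y + ε + η)^(2*α-2)|)
        volume 0 L := by
      apply ContinuousOn.intervalIntegrable
      rw [Set.uIcc_of_le hL.le]
      apply ContinuousOn.abs
      apply ContinuousOn.sub
      · exact ContinuousOn.rpow_const (by fun_prop)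
          (fun y hy => Or.inl (by nlinarith [hy.1, hx.1]))
      · exact ContinuousOn.rpow_const (by fun_prop)
          (fun y hy => Or.inl (by nlinarith [hy.1, hx.1]))
    have hint2 : IntervalIntegrable (fun y : ℝ =>
        (2-2*α)^ρ * (ε-η)^ρ * ((2*s.im + ε + η + x) + y)^(2*α-2-ρ)) volume 0 L := by
      apply ContinuousOn.intervalIntegrable
      rw [Set.uIcc_of_le hL.le]
      exact continuousOn_const.mul (ContinuousOn.rpow_const (by fun_prop)
        (fun y hy => Or.inl (by nlinarith [hy.1, hcx])))
    have hmono := intervalIntegral.integral_mono_on hL.le hint1 hint2 (fun y hy => hpt x hx y hy)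
    rw [intervalIntegral.integral_const_mul] at hmono
    refine hmono.trans ?_
    apply mul_le_mul_of_nonneg_left ?_ (by positivity)
    have := innerint (2*α-2-ρ) (2*s.im + ε + η + x) L (by linarith) hcx hL
    rw [show 2*α-2-ρ+1 = 2*α-1-ρ by ring] at this
    exact this
  -- outer integral
  rw [intervalIntegral.integral_of_le hL.le]
  have hRint : IntegrableOn (fun x : ℝ =>
      ((2-2*α)^ρ * (ε-η)^ρ / (-(2*α-1-ρ))) * x^(2*α-1-ρ)) (Set.Ioc 0 L) volume := by
    apply (intervalIntegrable_iff_integrableOn_Ioc_of_le hL.le).1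
    exact IntervalIntegrable.const_mul (intervalIntegral.intervalIntegrable_rpow' (by linarith)) _
  have step : (∫ x in Set.Ioc (0:ℝ) L, (∫ y in (0:ℝ)..L,
        |(2*s.im + x + y + 2*ε)^(2*α-2) - (2*s.im + x + y + ε + η)^(2*α-2)|))
      ≤ ∫ x in Set.Ioc (0:ℝ) L,
        ((2-2*α)^ρ * (ε-η)^ρ / (-(2*α-1-ρ))) * x^(2*α-1-ρ) := by
    apply integral_mono_of_nonneg
    · exact Filter.Eventually.of_forall
        (fun x => intervalIntegral.integral_nonneg hL.le (fun y _ => abs_nonneg _))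
    · exact hRint
    · apply MeasureTheory.ae_restrict_of_forall_mem measurableSet_Ioc
      intro x hx
      refine (inner x ⟨hx.1.le, hx.2⟩).trans ?_
      have h5 : (2*s.im + ε + η + x)^(2*α-1-ρ) ≤ x^(2*α-1-ρ) :=
        Real.rpow_le_rpow_of_nonpos hx.1 (by linarith) he1.le
      beta_reduce
      rw [show ((2-2*α)^ρ * (ε-η)^ρ / (-(2*α-1-ρ))) * x^(2*α-1-ρ)
          = (2-2*α)^ρ * (ε-η)^ρ * (x^(2*α-1-ρ) / (-(2*α-1-ρ))) by ring]
      apply mul_le_mul_of_nonneg_left ?_ (by positivity)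
      exact div_le_div_of_nonneg_right h5 he1'.le
  refine step.trans ?_
  rw [← intervalIntegral.integral_of_le hL.le, intervalIntegral.integral_const_mul,
    integral_rpow (Or.inl (by linarith)),
    show 2*α-1-ρ+1 = 2*α-ρ by ring, Real.zero_rpow (by linarith), sub_zero]
  rw [show (2-2*α)^ρ / ((-(2*α-1-ρ)) * (2*α-ρ)) * L ^ (2*α-ρ) * (ε-η)^ρ
      = (2-2*α)^ρ * (ε-η)^ρ / (-(2*α-1-ρ)) * (L^(2*α-ρ) / (2*α-ρ)) by
    field_simp]
end

section
/- Let α ∈ (0,1/2) and let Γ be a centered complex Gaussian process on Π⁺ whose derivative Γ' has covariance E[Γ'_z \overline{Γ'_w}] = (α(1−2α)/(2cos πα)) (−i(z−\bar w))^{2α−2} and E[Γ'_z Γ'_w] = 0. Define Γ^ε_t = Γ_{t+iε}. Then there exists a constant c (independent of ε, η, s, t) such that for all ε, η > 0 and s,t with Im s, Im t ≥ 0: E[|Γ^ε_t − Γ^ε_s|²] ≤ c|t−s|^{2α} and E[|Γ^ε_t − Γ^η_t|²] ≤ c|ε−η|^{2α}. -/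
open Complex MeasureTheory ComplexConjugate

section Aux

lemma affine_cpow_int (a b : ℂ) (hb : b ≠ 0) (σ : ℂ) (hσ : σ ≠ 0)
    (hre : ∀ u : ℝ, u ∈ Set.Icc (0:ℝ) 1 → 0 < (a + u * b).re) :
    ∫ u in (0:ℝ)..1, (a + u * b) ^ (σ - 1) =
      ((a + b) ^ σ - a ^ σ) / (σ * b) := by
  have hslit : ∀ u : ℝ, u ∈ Set.Icc (0:ℝ) 1 → (a + u * b) ∈ slitPlane := fun u hu =>
    mem_slitPlane_iff.mpr (Or.inl (hre u hu))
  have hderiv : ∀ u ∈ Set.uIcc (0:ℝ) 1,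
      HasDerivAt (fun u : ℝ => (a + u * b) ^ σ / (σ * b)) ((a + u * b) ^ (σ - 1)) u := by
    intro u hu
    rw [Set.uIcc_of_le (by norm_num : (0:ℝ) ≤ 1)] at hu
    have h1 : HasDerivAt (fun u : ℝ => a + (u:ℂ) * b) b u := by
      simpa using ((Complex.ofRealCLM.hasDerivAt (x := u)).mul_const b).const_add a
    have h2 := ((Complex.hasStrictDerivAt_cpow_const (c := σ)
        (hslit u hu)).hasDerivAt.comp u h1).div_const (σ * b)
    have h2' : HasDerivAt (fun u : ℝ => (a + u * b) ^ σ / (σ * b))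
        (σ * (a + ↑u * b) ^ (σ - 1) * b / (σ * b)) u := h2
    convert h2' using 1
    field_simp
  have hcont : IntervalIntegrable (fun u : ℝ => (a + u * b) ^ (σ - 1))
      MeasureTheory.volume 0 1 := by
    apply ContinuousOn.intervalIntegrable
    rw [Set.uIcc_of_le (by norm_num : (0:ℝ) ≤ 1)]
    intro u hu
    have h1 : ContinuousAt (fun u : ℝ => a + (u:ℂ) * b) u := by fun_prop
    exact (ContinuousAt.comp (x := u) (f := fun u : ℝ => a + (u:ℂ) * b)
      (continuousAt_cpow_const (hslit u hu)) h1).continuousWithinAt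
  rw [intervalIntegral.integral_eq_sub_of_hasDerivAt hderiv hcont]
  push_cast
  rw [one_mul, zero_mul, add_zero]
  ring

lemma affine_cpow_intble (a b : ℂ) (σ : ℂ)
    (hre : ∀ u : ℝ, u ∈ Set.Icc (0:ℝ) 1 → 0 < (a + u * b).re) :
    IntervalIntegrable (fun u : ℝ => (a + u * b) ^ σ) MeasureTheory.volume 0 1 := by
  apply ContinuousOn.intervalIntegrable
  rw [Set.uIcc_of_le (by norm_num : (0:ℝ) ≤ 1)]
  intro u hu
  have h1 : ContinuousAt (fun u : ℝ => a + (u:ℂ) * b) u := by fun_prop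
  exact (ContinuousAt.comp (x := u) (f := fun u : ℝ => a + (u:ℂ) * b)
    (continuousAt_cpow_const (mem_slitPlane_iff.mpr (Or.inl (hre u hu)))) h1).continuousWithinAt

lemma cpow_holder {r : ℝ} (hr0 : 0 < r) (hr1 : r ≤ 1) (ζ ξ : ℂ)
    (hζ : 0 < ζ.re) (hξ : 0 < ξ.re) :
    ‖ζ ^ (r:ℂ) - ξ ^ (r:ℂ)‖ ≤ 6 * ‖ζ - ξ‖ ^ r := by
  by_cases heq : ζ = ξ
  · simp [heq, Real.zero_rpow hr0.ne']
  set h := ‖ζ - ξ‖ with hh_def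
  have hh : 0 < h := norm_pos_iff.mpr (sub_ne_zero.mpr heq)
  have hhr : 0 < h ^ r := Real.rpow_pos_of_pos hh r
  by_cases hcase : ‖ξ‖ ≤ 2 * h
  · -- both small
    have hζn : ‖ζ‖ ≤ 3 * h := by
      have := norm_sub_norm_le ζ ξ
      rw [← hh_def] at this; linarith
    have habs : ∀ η : ℂ, ‖η ^ (r:ℂ)‖ = ‖η‖ ^ r := by
      intro η
      rw [Complex.norm_cpow_real]
    have h3 : ∀ η : ℂ, ‖η‖ ≤ 3 * h → ‖η ^ (r:ℂ)‖ ≤ 3 * h ^ r := by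
      intro η hη
      rw [habs]
      calc ‖η‖ ^ r ≤ (3 * h) ^ r :=
            Real.rpow_le_rpow (norm_nonneg η) hη hr0.le
        _ = 3 ^ r * h ^ r := Real.mul_rpow (by norm_num) hh.le
        _ ≤ 3 * h ^ r := by
            have : (3:ℝ) ^ r ≤ 3 ^ (1:ℝ) :=
              Real.rpow_le_rpow_of_exponent_le (by norm_num) hr1
            rw [Real.rpow_one] at this
            nlinarith
    calc ‖ζ ^ (r:ℂ) - ξ ^ (r:ℂ)‖ ≤ ‖ζ ^ (r:ℂ)‖ + ‖ξ ^ (r:ℂ)‖ := norm_sub_le _ _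
      _ ≤ 3 * h ^ r + 3 * h ^ r := add_le_add (h3 ζ hζn) (h3 ξ (le_trans hcase (by linarith)))
      _ = 6 * h ^ r := by ring
  · -- MVT on segment
    push_neg at hcase
    set s : Set ℂ := segment ℝ ξ ζ with hs_def
    have hseg : ∀ t ∈ s, 0 < t.re ∧ h < ‖t‖ := by
      intro t ht
      obtain ⟨a, b, ha, hb, hab, rfl⟩ := ht
      constructor
      · have : (a • ξ + b • ζ).re = a * ξ.re + b * ζ.re := by
          simp [Complex.add_re, Complex.smul_re]
        rw [this]
        rcases lt_or_ge 0 a with ha' | ha'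
        · have : 0 < a * ξ.re := mul_pos ha' hξ
          nlinarith [mul_nonneg hb hζ.le]
        · have ha0 : a = 0 := le_antisymm ha' ha
          have hb1 : b = 1 := by linarith
          rw [ha0, hb1]; simpa using hζ
      · have h1 : ‖a • ξ + b • ζ - ξ‖ = b * h := by
          have : a • ξ + b • ζ - ξ = b • (ζ - ξ) := by
            have ha' : a = 1 - b := by linarith
            rw [ha']
            module
          rw [this, norm_smul, Real.norm_eq_abs, _root_.abs_of_nonneg hb, hh_def]
        have h2 : ‖ξ‖ - ‖a • ξ + b • ζ‖ ≤ ‖a • ξ + b • ζ - ξ‖ := by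
          have := norm_sub_norm_le ξ (a • ξ + b • ζ)
          rwa [norm_sub_rev] at this
        have hb1 : b ≤ 1 := by linarith
        have hbh : b * h ≤ h := by nlinarith
        linarith
    have hderiv : ∀ t ∈ s, HasDerivWithinAt (fun z : ℂ => z ^ (r:ℂ))
        ((r:ℂ) * t ^ ((r:ℂ) - 1)) s t := by
      intro t ht
      exact ((Complex.hasStrictDerivAt_cpow_const
        (mem_slitPlane_iff.mpr (Or.inl (hseg t ht).1))).hasDerivAt).hasDerivWithinAt
    have hbound : ∀ t ∈ s, ‖(r:ℂ) * t ^ ((r:ℂ) - 1)‖ ≤ r * h ^ (r - 1) := by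
      intro t ht
      have ht' := (hseg t ht).2
      rw [norm_mul]
      have h1 : ‖(r:ℂ)‖ = r := by
        rw [Complex.norm_real, Real.norm_eq_abs, abs_of_pos hr0]
      have h2 : ‖t ^ ((r:ℂ) - 1)‖ = ‖t‖ ^ (r - 1) := by
        have : ((r:ℂ) - 1) = ((r - 1 : ℝ) : ℂ) := by push_cast; ring
        rw [this, Complex.norm_cpow_real]
      rw [h1, h2]
      have h3 : ‖t‖ ^ (r - 1) ≤ h ^ (r - 1) :=
        Real.rpow_le_rpow_of_nonpos hh ht'.le (by linarith)
      exact mul_le_mul_of_nonneg_left h3 hr0.le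
    have := Convex.norm_image_sub_le_of_norm_hasDerivWithin_le hderiv hbound
      (convex_segment ξ ζ) (left_mem_segment ℝ ξ ζ) (right_mem_segment ℝ ξ ζ)
    calc ‖ζ ^ (r:ℂ) - ξ ^ (r:ℂ)‖ ≤ r * h ^ (r - 1) * ‖ζ - ξ‖ := this
      _ = r * h ^ r := by
          have hx : h ^ (r - 1) * h = h ^ r := by
            rw [← Real.rpow_add_one hh.ne' (r - 1)]
            norm_num
          rw [← hh_def, mul_assoc, hx]
      _ ≤ 6 * h ^ r := by nlinarith

lemma affine_re_pos {z w : ℂ} (hz : 0 < z.im) (hw : 0 < w.im) (u v : ℝ)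
    (hu : u ∈ Set.Icc (0:ℝ) 1) (hv : v ∈ Set.Icc (0:ℝ) 1) :
    0 < ((((2*w.im:ℝ):ℂ) + (u:ℂ) * (-I*(z-w))) + (v:ℂ) * (I*(conj (z-w)))).re := by
  have hre : ((((2*w.im:ℝ):ℂ) + (u:ℂ) * (-I*(z-w))) + (v:ℂ) * (I*(conj (z-w)))).re
      = 2*w.im + (u+v)*(z-w).im := by
    simp [Complex.add_re, Complex.mul_re, Complex.mul_im, Complex.ofReal_re, Complex.ofReal_im,
      Complex.neg_re, Complex.neg_im, Complex.I_re, Complex.I_im, Complex.sub_re, Complex.sub_im,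
      Complex.conj_re, Complex.conj_im]
    ring
  rw [hre]
  have him : (z-w).im = z.im - w.im := by simp
  obtain ⟨hu0, hu1⟩ := hu; obtain ⟨hv0, hv1⟩ := hv
  rcases le_or_gt 0 ((z-w).im) with hq | hq
  · nlinarith [mul_nonneg (add_nonneg hu0 hv0) hq]
  · nlinarith [mul_nonpos_of_nonneg_of_nonpos (by linarith : (0:ℝ) ≤ 2 - (u+v)) hq.le]

lemma double_int (α : ℝ) (z w : ℂ) (hα : α ∈ Set.Ioo (0:ℝ) (1/2))
    (hz : 0 < z.im) (hw : 0 < w.im) (hzw : z ≠ w) :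
    (∫ u in (0:ℝ)..1, ∫ v in (0:ℝ)..1,
        (-I * ((w + u * (z - w)) - conj (w + v * (z - w)))) ^ (2 * (α:ℂ) - 2)
          * (z - w) * conj (z - w))
      = (((2*z.im:ℝ):ℂ) ^ (2*(α:ℂ)) - (((2*w.im:ℝ):ℂ) + I * conj (z-w)) ^ (2*(α:ℂ))
          - (((2*w.im:ℝ):ℂ) + -I * (z-w)) ^ (2*(α:ℂ)) + ((2*w.im:ℝ):ℂ) ^ (2*(α:ℂ)))
        / ((2*(α:ℂ) - 1) * (2*(α:ℂ))) := by
  obtain ⟨hα0, hα1⟩ := hα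
  set d : ℂ := z - w with hd_def
  have hd : d ≠ 0 := sub_ne_zero.mpr hzw
  set A : ℂ := ((2*w.im:ℝ):ℂ) with hA_def
  set e : ℂ := -I * d with he_def
  set f : ℂ := I * conj d with hf_def
  have he : e ≠ 0 := mul_ne_zero (by simp [Complex.I_ne_zero]) hd
  have hf : f ≠ 0 := mul_ne_zero Complex.I_ne_zero (by simpa using hd)
  set σ₁ : ℂ := 2*(α:ℂ) - 1 with hσ₁_def
  set σ₂ : ℂ := 2*(α:ℂ) with hσ₂_def
  have hσ₁ : σ₁ ≠ 0 := by
    rw [hσ₁_def]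
    intro h
    have : ((2*α - 1 : ℝ):ℂ) = 0 := by push_cast; linear_combination h
    rw [Complex.ofReal_eq_zero] at this
    linarith
  have hσ₂ : σ₂ ≠ 0 := by
    rw [hσ₂_def]
    intro h
    have : ((2*α : ℝ):ℂ) = 0 := by push_cast; linear_combination h
    rw [Complex.ofReal_eq_zero] at this
    linarith
  have hA' : -I * (w - conj w) = A := by
    apply Complex.ext <;>
      simp [hA_def, Complex.mul_re, Complex.mul_im] <;> ring
  have hrepos : ∀ u v : ℝ, u ∈ Set.Icc (0:ℝ) 1 → v ∈ Set.Icc (0:ℝ) 1 →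
      0 < ((A + (u:ℂ) * e) + (v:ℂ) * f).re := fun u v hu hv =>
    affine_re_pos hz hw u v hu hv
  have hbase : ∀ u v : ℝ, -I * ((w + (u:ℂ) * (z - w)) - conj (w + (v:ℂ) * (z - w)))
      = (A + (u:ℂ) * e) + (v:ℂ) * f := by
    intro u v
    have hc : conj (w + (v:ℂ) * (z - w)) = conj w + (v:ℂ) * conj (z - w) := by
      simp [map_add, map_mul, Complex.conj_ofReal]
    rw [hc, he_def, hf_def, ← hd_def]
    linear_combination hA'
  -- inner integral
  have hinner : ∀ u : ℝ, u ∈ Set.Icc (0:ℝ) 1 →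
      (∫ v in (0:ℝ)..1,
          (-I * ((w + (u:ℂ) * (z - w)) - conj (w + (v:ℂ) * (z - w)))) ^ (2 * (α:ℂ) - 2)
            * (z - w) * conj (z - w))
        = ((((A + (u:ℂ)*e) + f) ^ σ₁ - (A + (u:ℂ)*e) ^ σ₁) * ((z-w) * conj (z-w)))
            / (σ₁ * f) := by
    intro u hu
    have h1 : (fun v : ℝ =>
        (-I * ((w + (u:ℂ) * (z - w)) - conj (w + (v:ℂ) * (z - w)))) ^ (2 * (α:ℂ) - 2)
          * (z - w) * conj (z - w))
        = fun v : ℝ => ((A + (u:ℂ)*e) + (v:ℂ) * f) ^ (σ₁ - 1) * ((z-w) * conj (z-w)) := by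
      funext v
      rw [hbase u v, show 2*(α:ℂ) - 2 = σ₁ - 1 from by rw [hσ₁_def]; ring]
      ring
    rw [h1, intervalIntegral.integral_mul_const,
      affine_cpow_int (A + (u:ℂ)*e) f hf σ₁ hσ₁ (fun v hv => hrepos u v hu hv)]
    ring
  -- outer integral
  have houter : (∫ u in (0:ℝ)..1, ∫ v in (0:ℝ)..1,
      (-I * ((w + (u:ℂ) * (z - w)) - conj (w + (v:ℂ) * (z - w)))) ^ (2 * (α:ℂ) - 2)
        * (z - w) * conj (z - w))
      = (∫ u in (0:ℝ)..1,
          (((A + f) + (u:ℂ)*e) ^ (σ₂ - 1) - (A + (u:ℂ)*e) ^ (σ₂ - 1)))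
        * ((z-w) * conj (z-w) / (σ₁ * f)) := by
    rw [← intervalIntegral.integral_mul_const]
    apply intervalIntegral.integral_congr
    intro u hu
    rw [Set.uIcc_of_le (by norm_num : (0:ℝ) ≤ 1)] at hu
    dsimp only
    rw [hinner u hu]
    have h2 : (A + f) + (u:ℂ)*e = (A + (u:ℂ)*e) + f := by ring
    have h3 : σ₂ - 1 = σ₁ := hσ₁_def.symm
    rw [h2, h3]
    ring
  rw [houter]
  have hre1 : ∀ u : ℝ, u ∈ Set.Icc (0:ℝ) 1 → 0 < ((A + f) + (u:ℂ) * e).re := by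
    intro u hu
    have := hrepos u 1 hu (by norm_num)
    have h4 : (A + (u:ℂ)*e) + ((1:ℝ):ℂ)*f = (A + f) + (u:ℂ)*e := by push_cast; ring
    rwa [h4] at this
  have hre0 : ∀ u : ℝ, u ∈ Set.Icc (0:ℝ) 1 → 0 < (A + (u:ℂ) * e).re := by
    intro u hu
    have := hrepos u 0 hu (by norm_num)
    have h4 : (A + (u:ℂ)*e) + ((0:ℝ):ℂ)*f = A + (u:ℂ)*e := by push_cast; ring
    rwa [h4] at this
  rw [intervalIntegral.integral_sub
      (affine_cpow_intble (A + f) e (σ₂ - 1) hre1)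
      (affine_cpow_intble A e (σ₂ - 1) hre0),
    affine_cpow_int (A + f) e he σ₂ hσ₂ hre1,
    affine_cpow_int A e he σ₂ hσ₂ hre0]
  have hef : e * f = (z - w) * conj (z - w) := by
    rw [he_def, hf_def, ← hd_def]
    linear_combination (-(d * conj d)) * Complex.I_mul_I
  have hAef : A + f + e = ((2*z.im:ℝ):ℂ) := by
    rw [hA_def, he_def, hf_def]
    apply Complex.ext <;>
      simp [hd_def, Complex.mul_re, Complex.mul_im] <;> ring
  rw [show (A + f) + e = A + f + e from by ring, hAef, ← hef]
  field_simp
  ring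

lemma delta_bound (α : ℝ) (hα : α ∈ Set.Ioo (0:ℝ) (1/2)) (z w : ℂ)
    (hz : 0 < z.im) (hw : 0 < w.im) (hzw : z ≠ w) :
    ‖∫ u in (0:ℝ)..1, ∫ v in (0:ℝ)..1,
        (-I * ((w + u * (z - w)) - conj (w + v * (z - w)))) ^ (2 * (α:ℂ) - 2)
          * (z - w) * conj (z - w)‖
      ≤ (12 / ((1 - 2*α) * (2*α))) * ‖z - w‖ ^ (2*α) := by
  obtain ⟨hα0, hα1⟩ := hα
  rw [double_int α z w ⟨hα0, hα1⟩ hz hw hzw, norm_div, norm_mul]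
  have h1 : ‖2*(α:ℂ) - 1‖ = 1 - 2*α := by
    rw [show 2*(α:ℂ) - 1 = ((2*α - 1 : ℝ):ℂ) from by push_cast; ring, Complex.norm_real,
      Real.norm_eq_abs, abs_of_neg (by linarith : 2*α - 1 < 0)]
    ring
  have h2 : ‖2*(α:ℂ)‖ = 2*α := by
    rw [show 2*(α:ℂ) = ((2*α : ℝ):ℂ) from by push_cast; ring, Complex.norm_real,
      Real.norm_eq_abs, abs_of_pos (by linarith : (0:ℝ) < 2*α)]
  rw [h1, h2]
  have hr0 : 0 < 2*α := by linarith
  have hr1 : 2*α ≤ 1 := by linarith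
  have hcast : ((2*α : ℝ):ℂ) = 2*(α:ℂ) := by push_cast; ring
  have hD : 0 < (1 - 2*α) * (2*α) := by nlinarith
  have hzw' : 0 < z.im + w.im := by linarith
  have hre1 : 0 < (((2*z.im:ℝ):ℂ)).re := by simp; linarith
  have hre2 : 0 < ((((2*w.im:ℝ):ℂ)) + I * conj (z - w)).re := by
    have : ((((2*w.im:ℝ):ℂ)) + I * conj (z - w)).re = 2*w.im + (z.im - w.im) := by
      simp [Complex.add_re, Complex.mul_re]
      try ring
    rw [this]; linarith
  have hre3 : 0 < ((((2*w.im:ℝ):ℂ)) + -I * (z - w)).re := by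
    have : ((((2*w.im:ℝ):ℂ)) + -I * (z - w)).re = 2*w.im + (z.im - w.im) := by
      simp [Complex.add_re, Complex.mul_re]
      try ring
    rw [this]; linarith
  have hre4 : 0 < (((2*w.im:ℝ):ℂ)).re := by simp; linarith
  have hd1 : ((2*z.im:ℝ):ℂ) - (((2*w.im:ℝ):ℂ) + I * conj (z - w)) = -I * (z - w) := by
    apply Complex.ext <;> simp [Complex.mul_re, Complex.mul_im] <;> ring
  have hd2 : (((2*w.im:ℝ):ℂ) + -I * (z - w)) - ((2*w.im:ℝ):ℂ) = -I * (z - w) := by ring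
  have hnorm : ‖-I * (z - w)‖ = ‖z - w‖ := by
    rw [norm_mul, norm_neg, Complex.norm_I, one_mul]
  have hb1 := cpow_holder hr0 hr1 ((2*z.im:ℝ):ℂ) (((2*w.im:ℝ):ℂ) + I * conj (z - w)) hre1 hre2
  rw [hcast, hd1, hnorm] at hb1
  have hb2 := cpow_holder hr0 hr1 (((2*w.im:ℝ):ℂ) + -I * (z - w)) ((2*w.im:ℝ):ℂ) hre3 hre4
  rw [hcast, hd2, hnorm] at hb2
  set a : ℝ := ‖z - w‖ ^ (2*α) with ha_def
  set X1 : ℂ := ((2*z.im:ℝ):ℂ) ^ (2*(α:ℂ))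
  set Y1 : ℂ := (((2*w.im:ℝ):ℂ) + I * conj (z - w)) ^ (2*(α:ℂ))
  set Y2 : ℂ := (((2*w.im:ℝ):ℂ) + -I * (z - w)) ^ (2*(α:ℂ))
  set X2 : ℂ := ((2*w.im:ℝ):ℂ) ^ (2*(α:ℂ))
  have hDelta : ‖X1 - Y1 - Y2 + X2‖ ≤ 12 * a := by
    calc ‖X1 - Y1 - Y2 + X2‖ = ‖(X1 - Y1) - (Y2 - X2)‖ := by ring_nf
      _ ≤ ‖X1 - Y1‖ + ‖Y2 - X2‖ := norm_sub_le _ _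
      _ ≤ 6 * a + 6 * a := add_le_add hb1 hb2
      _ = 12 * a := by ring
  calc ‖X1 - Y1 - Y2 + X2‖ / ((1 - 2*α) * (2*α)) ≤ (12 * a) / ((1 - 2*α) * (2*α)) :=
        (div_le_div_iff_of_pos_right hD).mpr hDelta
    _ = 12 / ((1 - 2*α) * (2*α)) * a := by ring

end Aux

/-- Moment bounds for the regularized analytic fBm `Γ^ε_t = Γ_{t+iε}`:
`E[|Γ^ε_t − Γ^ε_s|²] ≤ c|t−s|^{2α}` and `E[|Γ^ε_t − Γ^η_t|²] ≤ c|ε−η|^{2α}`,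
given the covariance of path integrals of `Γ'` along segments. -/
theorem stmt7 (α : ℝ) (hα : α ∈ Set.Ioo (0 : ℝ) (1 / 2))
    {U : Type*} [MeasurableSpace U] (P : Measure U) [IsProbabilityMeasure P]
    (Γ : ℂ → U → ℂ)
    (hL2 : ∀ z : ℂ, 0 < z.im → MemLp (Γ z) 2 P)
    (hcov : ∀ z w : ℂ, 0 < z.im → 0 < w.im →
      (∫ ω, (Γ z ω - Γ w ω) * (starRingEnd ℂ) (Γ z ω - Γ w ω) ∂P) =
        ((α * (1 - 2 * α) / (2 * Real.cos (Real.pi * α))) : ℂ) *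
          ∫ u in (0:ℝ)..1, ∫ v in (0:ℝ)..1,
            (-I * ((w + u * (z - w)) - (starRingEnd ℂ) (w + v * (z - w))))
                ^ (2 * (α : ℂ) - 2)
              * (z - w) * (starRingEnd ℂ) (z - w)) :
    ∃ c > 0, ∀ ε η : ℝ, 0 < ε → 0 < η → ∀ s t : ℂ, 0 ≤ s.im → 0 ≤ t.im →
      (∫ ω, ‖Γ (t + I * ε) ω - Γ (s + I * ε) ω‖ ^ 2 ∂P)
        ≤ c * ‖t - s‖ ^ (2 * α) ∧
      (∫ ω, ‖Γ (t + I * ε) ω - Γ (t + I * η) ω‖ ^ 2 ∂P)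
        ≤ c * |ε - η| ^ (2 * α) := by
  obtain ⟨hα0, hα1⟩ := hα
  set K : ℝ := α * (1 - 2 * α) / (2 * Real.cos (Real.pi * α)) with hK_def
  set D : ℝ := (1 - 2*α) * (2*α) with hD_def
  have hD : 0 < D := by rw [hD_def]; nlinarith
  set c : ℝ := 12 * |K| / D + 1 with hc_def
  have hc : 0 < c := by
    have h0 : 0 ≤ 12 * |K| / D := div_nonneg (by positivity) hD.le
    rw [hc_def]; linarith
  have hKnorm : ‖((α * (1 - 2 * α) / (2 * Real.cos (Real.pi * α))) : ℂ)‖ = |K| := by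
    have : ((α : ℂ) * (1 - 2 * (α:ℂ)) / (2 * ((Real.cos (Real.pi * α) : ℝ) : ℂ))) = ((K : ℝ) : ℂ) := by
      rw [hK_def]; push_cast; ring
    rw [this, Complex.norm_real, Real.norm_eq_abs]
  have hmain : ∀ z w : ℂ, 0 < z.im → 0 < w.im →
      (∫ ω, ‖Γ z ω - Γ w ω‖ ^ 2 ∂P) ≤ c * ‖z - w‖ ^ (2 * α) := by
    intro z w hz hw
    by_cases hzw : z = w
    · subst hzw
      simp [sub_self, Real.zero_rpow (show (2*α) ≠ 0 by positivity)]
    · have heq := hcov z w hz hw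
      have hpt : ∀ ω : U, (Γ z ω - Γ w ω) * conj (Γ z ω - Γ w ω)
          = ((‖Γ z ω - Γ w ω‖ ^ 2 : ℝ) : ℂ) := by
        intro ω
        rw [Complex.mul_conj]
        norm_cast
        exact (Complex.sq_norm _).symm
      simp_rw [hpt] at heq
      rw [show (∫ ω, ((‖Γ z ω - Γ w ω‖ ^ 2 : ℝ) : ℂ) ∂P)
          = (((∫ ω, ‖Γ z ω - Γ w ω‖ ^ 2 ∂P : ℝ)) : ℂ) from integral_ofReal] at heq
      have hre := congrArg Complex.re heq
      rw [Complex.ofReal_re] at hre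
      rw [hre]
      have hrnn : 0 ≤ ‖z - w‖ ^ (2 * α) :=
        Real.rpow_nonneg (norm_nonneg _) _
      calc (((α * (1 - 2 * α) / (2 * Real.cos (Real.pi * α))) : ℂ) *
            ∫ u in (0:ℝ)..1, ∫ v in (0:ℝ)..1,
              (-I * ((w + u * (z - w)) - conj (w + v * (z - w)))) ^ (2 * (α : ℂ) - 2)
                * (z - w) * conj (z - w)).re
          ≤ ‖((α * (1 - 2 * α) / (2 * Real.cos (Real.pi * α))) : ℂ) *
            ∫ u in (0:ℝ)..1, ∫ v in (0:ℝ)..1,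
              (-I * ((w + u * (z - w)) - conj (w + v * (z - w)))) ^ (2 * (α : ℂ) - 2)
                * (z - w) * conj (z - w)‖ := Complex.re_le_norm _
        _ = |K| * ‖∫ u in (0:ℝ)..1, ∫ v in (0:ℝ)..1,
              (-I * ((w + u * (z - w)) - conj (w + v * (z - w)))) ^ (2 * (α : ℂ) - 2)
                * (z - w) * conj (z - w)‖ := by rw [norm_mul, hKnorm]
        _ ≤ |K| * (12 / D * ‖z - w‖ ^ (2 * α)) := by
            apply mul_le_mul_of_nonneg_left _ (abs_nonneg K)
            rw [hD_def]
            exact delta_bound α ⟨hα0, hα1⟩ z w hz hw hzw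
        _ = 12 * |K| / D * ‖z - w‖ ^ (2 * α) := by ring
        _ ≤ c * ‖z - w‖ ^ (2 * α) := by
            apply mul_le_mul_of_nonneg_right _ hrnn
            rw [hc_def]; linarith
  refine ⟨c, hc, fun ε η hε hη s t hs ht => ⟨?_, ?_⟩⟩
  · have hz : 0 < (t + I * (ε:ℂ)).im := by
      simp [Complex.add_im, Complex.mul_im]
      linarith
    have hw : 0 < (s + I * (ε:ℂ)).im := by
      simp [Complex.add_im, Complex.mul_im]
      linarith
    have h := hmain (t + I * ε) (s + I * ε) hz hw
    rwa [show (t + I * (ε:ℂ)) - (s + I * (ε:ℂ)) = t - s from by ring] at h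
  · have hz : 0 < (t + I * (ε:ℂ)).im := by
      simp [Complex.add_im, Complex.mul_im]
      linarith
    have hw : 0 < (t + I * (η:ℂ)).im := by
      simp [Complex.add_im, Complex.mul_im]
      linarith
    have h := hmain (t + I * ε) (t + I * η) hz hw
    rwa [show (t + I * (ε:ℂ)) - (t + I * (η:ℂ)) = I * ((ε - η : ℝ) : ℂ) from by push_cast; ring,
      norm_mul, Complex.norm_I, Complex.norm_real, Real.norm_eq_abs, one_mul] at h
end

section
/- Multiplicativity of iterated integrals (Chen's relation) for smooth paths: let f¹,…,fⁿ : [0,T] → ℂ be C¹ functions and define the iterated integrals recursively by 𝓙_{ts}(df¹) = f¹_t − f¹_s and 𝓙_{ts}(df^k ⋯ df¹) = ∫_s^t (f^k)'(u) 𝓙_{us}(df^{k−1} ⋯ df¹) du. Then for all s ≤ u ≤ t, 𝓙_{ts}(dfⁿ ⋯ df¹) − 𝓙_{tu}(dfⁿ ⋯ df¹) − 𝓙_{us}(dfⁿ ⋯ df¹) = Σ_{i=1}^{n−1} 𝓙_{tu}(dfⁿ ⋯ df^{i+1}) · 𝓙_{us}(df^i ⋯ df¹). -/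
open MeasureTheory intervalIntegral

/-- Iterated Riemann integrals: `iterInt f f' n t s = 𝓙_{ts}(df^n ⋯ df^0)`, defined by
`iterInt f f' 0 t s = f 0 t − f 0 s` and
`iterInt f f' (n+1) t s = ∫_s^t (f (n+1))'(u) · iterInt f f' n u s du`. -/
noncomputable def iterInt (f f' : ℕ → ℝ → ℂ) : ℕ → ℝ → ℝ → ℂ
  | 0 => fun t s => f 0 t - f 0 s
  | n + 1 => fun t s => ∫ u in s..t, f' (n + 1) u * iterInt f f' n u s

lemma iterInt_cont (f f' : ℕ → ℝ → ℂ)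
    (hderiv : ∀ i t, HasDerivAt (f i) (f' i t) t)
    (hcont : ∀ i, Continuous (f' i)) (n : ℕ) (s : ℝ) :
    Continuous (fun t => iterInt f f' n t s) := by
  induction n with
  | zero =>
    have h0 : Continuous (f 0) := by
      rw [continuous_iff_continuousAt]; exact fun t => (hderiv 0 t).continuousAt
    exact (h0.sub continuous_const : Continuous (fun t => f 0 t - f 0 s))
  | succ n ih =>
    have hg : Continuous (fun v => f' (n+1) v * iterInt f f' n v s) :=
      (hcont (n+1)).mul ih
    have := intervalIntegral.continuous_primitive (μ := volume)
      (fun a b => hg.intervalIntegrable a b) s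
    simpa [iterInt] using this

lemma chen_key (f f' : ℕ → ℝ → ℂ)
    (hderiv : ∀ i t, HasDerivAt (f i) (f' i t) t)
    (hcont : ∀ i, Continuous (f' i)) :
    ∀ (n : ℕ) (s u t : ℝ), s ≤ u → u ≤ t →
    iterInt f f' n t s - iterInt f f' n t u - iterInt f f' n u s
      = ∑ i : Fin n,
          iterInt (fun j => f (j + (i : ℕ) + 1)) (fun j => f' (j + (i : ℕ) + 1))
              (n - 1 - (i : ℕ)) t u
            * iterInt f f' (i : ℕ) u s := by
  intro n
  induction n with
  | zero =>
    intro s u t _ _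
    simp only [iterInt, Finset.univ_eq_empty, Finset.sum_empty]
    ring
  | succ n ih =>
    intro s u t hsu hut
    have hJc : ∀ a : ℝ, Continuous (fun v => iterInt f f' n v a) :=
      fun a => iterInt_cont f f' hderiv hcont n a
    have hint : ∀ (a b c : ℝ),
        IntervalIntegrable (fun v => f' (n+1) v * iterInt f f' n v a) volume b c :=
      fun a b c => ((hcont (n+1)).mul (hJc a)).intervalIntegrable b c
    -- split the outer integral at u
    have hsplit : iterInt f f' (n+1) t s
        = iterInt f f' (n+1) u s + ∫ v in u..t, f' (n+1) v * iterInt f f' n v s := by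
      show (∫ v in s..t, f' (n+1) v * iterInt f f' n v s) = _
      rw [← integral_add_adjacent_intervals (hint s s u) (hint s u t)]
      rfl
    -- rewrite the integrand on [u, t] using the induction hypothesis
    have hcongr : (∫ v in u..t, f' (n+1) v * iterInt f f' n v s)
        = ∫ v in u..t, (f' (n+1) v * iterInt f f' n v u
            + f' (n+1) v * iterInt f f' n u s
            + ∑ i : Fin n, f' (n+1) v *
                iterInt (fun j => f (j + (i : ℕ) + 1)) (fun j => f' (j + (i : ℕ) + 1))
                  (n - 1 - (i : ℕ)) v u
                * iterInt f f' (i : ℕ) u s) := by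
      apply intervalIntegral.integral_congr
      intro v hv
      rw [Set.uIcc_of_le hut] at hv
      have h1 : iterInt f f' n v s = iterInt f f' n v u + iterInt f f' n u s
          + ∑ i : Fin n,
              iterInt (fun j => f (j + (i : ℕ) + 1)) (fun j => f' (j + (i : ℕ) + 1))
                (n - 1 - (i : ℕ)) v u * iterInt f f' (i : ℕ) u s := by
        linear_combination ih s u v hsu hv.1
      dsimp only
      rw [h1, mul_add, mul_add, Finset.mul_sum]
      congr 1
      apply Finset.sum_congr rfl
      intro i _
      ring
    -- continuity of the shifted iterated integrals
    have hshiftc : ∀ i : Fin n,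
        Continuous (fun v => iterInt (fun j => f (j + (i : ℕ) + 1))
          (fun j => f' (j + (i : ℕ) + 1)) (n - 1 - (i : ℕ)) v u) :=
      fun i => iterInt_cont _ _ (fun j t => hderiv _ t) (fun j => hcont _) _ u
    have hI1 : IntervalIntegrable (fun v => f' (n+1) v * iterInt f f' n v u) volume u t :=
      hint u u t
    have hI2 : IntervalIntegrable (fun v => f' (n+1) v * iterInt f f' n u s) volume u t :=
      ((hcont (n+1)).mul continuous_const).intervalIntegrable u t
    have hI3 : ∀ i : Fin n, IntervalIntegrable (fun v => f' (n+1) v *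
        iterInt (fun j => f (j + (i : ℕ) + 1)) (fun j => f' (j + (i : ℕ) + 1))
          (n - 1 - (i : ℕ)) v u * iterInt f f' (i : ℕ) u s) volume u t :=
      fun i => (((hcont (n+1)).mul (hshiftc i)).mul continuous_const).intervalIntegrable u t
    have hI3' : IntervalIntegrable (fun v => ∑ i : Fin n, f' (n+1) v *
        iterInt (fun j => f (j + (i : ℕ) + 1)) (fun j => f' (j + (i : ℕ) + 1))
          (n - 1 - (i : ℕ)) v u * iterInt f f' (i : ℕ) u s) volume u t :=
      (continuous_finset_sum _ (fun i _ =>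
        (((hcont (n+1)).mul (hshiftc i)).mul continuous_const))).intervalIntegrable u t
    have hdistr : (∫ v in u..t, (f' (n+1) v * iterInt f f' n v u
            + f' (n+1) v * iterInt f f' n u s
            + ∑ i : Fin n, f' (n+1) v *
                iterInt (fun j => f (j + (i : ℕ) + 1)) (fun j => f' (j + (i : ℕ) + 1))
                  (n - 1 - (i : ℕ)) v u
                * iterInt f f' (i : ℕ) u s))
        = (∫ v in u..t, f' (n+1) v * iterInt f f' n v u)
          + (∫ v in u..t, f' (n+1) v * iterInt f f' n u s)
          + ∑ i : Fin n, (∫ v in u..t, f' (n+1) v *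
              iterInt (fun j => f (j + (i : ℕ) + 1)) (fun j => f' (j + (i : ℕ) + 1))
                (n - 1 - (i : ℕ)) v u) * iterInt f f' (i : ℕ) u s := by
      rw [intervalIntegral.integral_add (hI1.add hI2) hI3',
        intervalIntegral.integral_add hI1 hI2,
        intervalIntegral.integral_finset_sum (fun i _ => hI3 i)]
      congr 1
      apply Finset.sum_congr rfl
      intro i _
      rw [intervalIntegral.integral_mul_const]
    -- identify the middle integral
    have hmid : (∫ v in u..t, f' (n+1) v * iterInt f f' n u s)
        = (f (n+1) t - f (n+1) u) * iterInt f f' n u s := by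
      rw [intervalIntegral.integral_mul_const,
        intervalIntegral.integral_eq_sub_of_hasDerivAt (fun x _ => hderiv (n+1) x)
          ((hcont (n+1)).intervalIntegrable u t)]
    -- identify each summand integral as a shifted iterated integral
    have hsum : ∀ i : Fin n, (∫ v in u..t, f' (n+1) v *
          iterInt (fun j => f (j + (i : ℕ) + 1)) (fun j => f' (j + (i : ℕ) + 1))
            (n - 1 - (i : ℕ)) v u)
        = iterInt (fun j => f (j + (i : ℕ) + 1)) (fun j => f' (j + (i : ℕ) + 1))
            (n - (i : ℕ)) t u := by
      intro i
      have hi : (i : ℕ) < n := i.isLt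
      have h2 : n - (i : ℕ) = (n - 1 - (i : ℕ)) + 1 := by omega
      have h3 : (n - 1 - (i : ℕ)) + 1 + (i : ℕ) + 1 = n + 1 := by omega
      rw [h2]
      show _ = ∫ v in u..t, f' ((n - 1 - (i : ℕ)) + 1 + (i : ℕ) + 1) v * _
      rw [h3]
    -- assemble
    have hgoalR : (∑ i : Fin (n+1),
          iterInt (fun j => f (j + (i : ℕ) + 1)) (fun j => f' (j + (i : ℕ) + 1))
              (n + 1 - 1 - (i : ℕ)) t u * iterInt f f' (i : ℕ) u s)
        = (∑ i : Fin n,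
            iterInt (fun j => f (j + (i : ℕ) + 1)) (fun j => f' (j + (i : ℕ) + 1))
              (n - (i : ℕ)) t u * iterInt f f' (i : ℕ) u s)
          + (f (n+1) t - f (n+1) u) * iterInt f f' n u s := by
      rw [Fin.sum_univ_castSucc]
      have hsum2 : (∑ i : Fin n,
            iterInt (fun j => f (j + ((Fin.castSucc i : Fin (n+1)) : ℕ) + 1))
              (fun j => f' (j + ((Fin.castSucc i : Fin (n+1)) : ℕ) + 1))
              (n + 1 - 1 - ((Fin.castSucc i : Fin (n+1)) : ℕ)) t u
              * iterInt f f' ((Fin.castSucc i : Fin (n+1)) : ℕ) u s)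
          = ∑ i : Fin n,
            iterInt (fun j => f (j + (i : ℕ) + 1)) (fun j => f' (j + (i : ℕ) + 1))
              (n - (i : ℕ)) t u * iterInt f f' (i : ℕ) u s := by
        apply Finset.sum_congr rfl
        intro i _
        simp only [Fin.coe_castSucc, Nat.add_sub_cancel]
      rw [hsum2]
      have hlast : iterInt (fun j => f (j + ((Fin.last n : Fin (n+1)) : ℕ) + 1))
            (fun j => f' (j + ((Fin.last n : Fin (n+1)) : ℕ) + 1))
            (n + 1 - 1 - ((Fin.last n : Fin (n+1)) : ℕ)) t u
            * iterInt f f' ((Fin.last n : Fin (n+1)) : ℕ) u s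
          = (f (n+1) t - f (n+1) u) * iterInt f f' n u s := by
        simp [iterInt, Fin.val_last]
      rw [hlast]
    have hJtu : iterInt f f' (n+1) t u
        = ∫ v in u..t, f' (n+1) v * iterInt f f' n v u := rfl
    calc iterInt f f' (n+1) t s - iterInt f f' (n+1) t u - iterInt f f' (n+1) u s
        = (∫ v in u..t, f' (n+1) v * iterInt f f' n v s) - iterInt f f' (n+1) t u := by
          rw [hsplit]; ring
      _ = _ := by
          rw [hcongr, hdistr, hmid, hJtu, hgoalR]
          rw [Finset.sum_congr rfl (fun i _ => by rw [hsum i])]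
          ring

/-- Chen's relation (multiplicativity) for iterated integrals of `C¹` paths:
`𝓙_{ts} − 𝓙_{tu} − 𝓙_{us} = ∑_i 𝓙_{tu}(upper part) · 𝓙_{us}(lower part)`. -/
theorem stmt12 (f f' : ℕ → ℝ → ℂ)
    (hderiv : ∀ i t, HasDerivAt (f i) (f' i t) t)
    (hcont : ∀ i, Continuous (f' i))
    (n : ℕ) (s u t : ℝ) (hsu : s ≤ u) (hut : u ≤ t) :
    iterInt f f' n t s - iterInt f f' n t u - iterInt f f' n u s
      = ∑ i : Fin n,
          iterInt (fun j => f (j + (i : ℕ) + 1)) (fun j => f' (j + (i : ℕ) + 1))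
              (n - 1 - (i : ℕ)) t u
            * iterInt f f' (i : ℕ) u s := by
  exact chen_key f f' hderiv hcont n s u t hsu hut
end

section
/- Uniqueness part of the sewing lemma: let Ω ⊆ ℂ be convex, μ > 1, and suppose g, g̃ ∈ C_2(Ω;V) both satisfy δg = δg̃ (i.e. g_{ts} − g_{tu} − g_{us} = g̃_{ts} − g̃_{tu} − g̃_{us} for all s,u,t) and both satisfy the Hölder bound |g_{ts}| ≤ K|t−s|^μ, |g̃_{ts}| ≤ K̃|t−s|^μ. Then g = g̃. -/
/-- Uniqueness part of the sewing lemma: two 1-increments with the same coboundary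
and both `μ`-Hölder with `μ > 1` coincide. -/
theorem stmt15 {V : Type*} [NormedAddCommGroup V] [NormedSpace ℂ V]
    (Ω : Set ℂ) (hconv : Convex ℝ Ω) (μ K K' : ℝ) (hμ : 1 < μ)
    (g g' : ℂ → ℂ → V)
    (hg0 : ∀ t ∈ Ω, g t t = 0) (hg'0 : ∀ t ∈ Ω, g' t t = 0)
    (hδ : ∀ s ∈ Ω, ∀ u ∈ Ω, ∀ t ∈ Ω,
      g t s - g t u - g u s = g' t s - g' t u - g' u s)
    (hK : ∀ s ∈ Ω, ∀ t ∈ Ω, ‖g t s‖ ≤ K * ‖t - s‖ ^ μ)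
    (hK' : ∀ s ∈ Ω, ∀ t ∈ Ω, ‖g' t s‖ ≤ K' * ‖t - s‖ ^ μ) :
    ∀ s ∈ Ω, ∀ t ∈ Ω, g t s = g' t s := by
  intro s hs t ht
  set h : ℂ → ℂ → V := fun a b => g a b - g' a b with hh
  suffices hz : h t s = 0 by
    have : g t s - g' t s = 0 := hz
    exact sub_eq_zero.mp this
  -- cocycle identity for h
  have hcoc : ∀ a ∈ Ω, ∀ b ∈ Ω, ∀ c ∈ Ω, h c a = h c b + h b a := by
    intro a ha b hb c hc
    have key : h c a - (h c b + h b a) = 0 := by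
      have : (g c a - g' c a) - ((g c b - g' c b) + (g b a - g' b a))
          = (g c a - g c b - g b a) - (g' c a - g' c b - g' b a) := by abel
      simp only [hh, this, hδ a ha b hb c hc, sub_self]
    exact sub_eq_zero.mp key
  have hdiag : h s s = 0 := by
    simp only [hh, hg0 s hs, hg'0 s hs, sub_zero]
  set d : ℝ := ‖t - s‖ with hd
  have hd0 : 0 ≤ d := norm_nonneg _
  -- main bound for every n ≥ 1
  have hbound : ∀ n : ℕ, 1 ≤ n →
      ‖h t s‖ ≤ (K + K') * d ^ μ * (n : ℝ) ^ (1 - μ) := by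
    intro n hn
    have hnpos : (0 : ℝ) < n := by exact_mod_cast hn
    set p : ℕ → ℂ := fun i => (1 - (i : ℝ) / n) • s + ((i : ℝ) / n) • t with hp
    have hp0 : p 0 = s := by simp [hp]
    have hpn : p n = t := by
      have hnn : (n : ℝ) / n = 1 := div_self (ne_of_gt hnpos)
      simp only [hp, hnn, sub_self, zero_smul, one_smul, zero_add]
    have hpΩ : ∀ i, i ≤ n → p i ∈ Ω := by
      intro i hi
      have h1 : (0 : ℝ) ≤ (i : ℝ) / n := by positivity
      have h2 : (i : ℝ) / n ≤ 1 := by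
        rw [div_le_one hnpos]; exact_mod_cast hi
      exact hconv hs ht (by linarith) h1 (by ring)
    have hstep : ∀ i, p (i + 1) - p i = ((1 : ℝ) / n) • (t - s) := by
      intro i
      simp only [hp]
      push_cast
      rw [smul_sub]
      rw [sub_smul, sub_smul, one_smul]
      have e1 : ((i : ℝ) + 1) / n = (i : ℝ) / n + 1 / n := by ring
      rw [e1, add_smul, add_smul]
      abel
    have habs : ∀ i, ‖p (i + 1) - p i‖ = d / n := by
      intro i
      rw [hstep i]
      rw [show ((1 : ℝ) / n) • (t - s) = ((1 : ℝ) / n : ℂ) * (t - s) by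
        simp [Complex.real_smul]]
      rw [norm_mul, hd]
      simp [abs_of_nonneg (le_of_lt hnpos), div_eq_mul_inv, mul_comm]
    -- telescoping
    have htel : ∀ k, k ≤ n → h (p k) s = ∑ i ∈ Finset.range k, h (p (i + 1)) (p i) := by
      intro k
      induction k with
      | zero => intro _; simpa [hp0] using hdiag
      | succ k ih =>
        intro hk
        have hk' : k ≤ n := Nat.le_of_succ_le hk
        rw [Finset.sum_range_succ, ← ih hk']
        have := hcoc s hs (p k) (hpΩ k hk') (p (k + 1)) (hpΩ (k + 1) hk)
        rw [this]; abel
    have hts : h t s = ∑ i ∈ Finset.range n, h (p (i + 1)) (p i) := by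
      rw [← hpn]; exact htel n le_rfl
    have hterm : ∀ i ∈ Finset.range n,
        ‖h (p (i + 1)) (p i)‖ ≤ (K + K') * (d / n) ^ μ := by
      intro i hi
      have hi' : i + 1 ≤ n := Finset.mem_range.mp hi
      have h1 := hK (p i) (hpΩ i (Nat.le_of_succ_le hi')) (p (i + 1)) (hpΩ (i + 1) hi')
      have h2 := hK' (p i) (hpΩ i (Nat.le_of_succ_le hi')) (p (i + 1)) (hpΩ (i + 1) hi')
      rw [habs i] at h1 h2
      calc ‖h (p (i + 1)) (p i)‖ ≤ ‖g (p (i + 1)) (p i)‖ + ‖g' (p (i + 1)) (p i)‖ :=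
            norm_sub_le _ _
        _ ≤ K * (d / n) ^ μ + K' * (d / n) ^ μ := add_le_add h1 h2
        _ = (K + K') * (d / n) ^ μ := by ring
    have hsum : ‖h t s‖ ≤ (n : ℝ) * ((K + K') * (d / n) ^ μ) := by
      rw [hts]
      calc ‖∑ i ∈ Finset.range n, h (p (i + 1)) (p i)‖
          ≤ ∑ i ∈ Finset.range n, ‖h (p (i + 1)) (p i)‖ := norm_sum_le _ _
        _ ≤ ∑ _i ∈ Finset.range n, (K + K') * (d / n) ^ μ := Finset.sum_le_sum hterm
        _ = (n : ℝ) * ((K + K') * (d / n) ^ μ) := by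
            rw [Finset.sum_const, Finset.card_range, nsmul_eq_mul]
    have heq : (n : ℝ) * ((K + K') * (d / n) ^ μ) = (K + K') * d ^ μ * (n : ℝ) ^ (1 - μ) := by
      rw [Real.div_rpow hd0 (le_of_lt hnpos)]
      rw [Real.rpow_sub hnpos, Real.rpow_one]
      field_simp
    linarith [hsum, heq ▸ hsum]
  -- take the limit
  have hlim : Filter.Tendsto (fun n : ℕ => (K + K') * d ^ μ * (n : ℝ) ^ (1 - μ))
      Filter.atTop (nhds 0) := by
    have h1 : Filter.Tendsto (fun x : ℝ => x ^ (1 - μ)) Filter.atTop (nhds 0) := by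
      have := tendsto_rpow_neg_atTop (y := μ - 1) (by linarith)
      simpa [show -(μ - 1) = 1 - μ by ring] using this
    have h2 : Filter.Tendsto (fun n : ℕ => ((n : ℝ)) ^ (1 - μ)) Filter.atTop (nhds 0) :=
      h1.comp tendsto_natCast_atTop_atTop
    simpa using h2.const_mul ((K + K') * d ^ μ)
  have hle : ‖h t s‖ ≤ 0 := by
    refine ge_of_tendsto hlim ?_
    filter_upwards [Filter.eventually_ge_atTop 1] with n hn
    exact hbound n hn
  have : ‖h t s‖ = 0 := le_antisymm hle (norm_nonneg _)
  exact norm_eq_zero.mp this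
end
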